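/- arXiv:1405.0648 — 5 statements merged into one kernel-verified Lean document; each statement's English description precedes it below -/
import Mathlib

section
/- If R is left Noetherian, then a left R-module is weak injective if and only if it is injective. -/
open CategoryTheory Opposite

noncomputable section

variable (R : Type) [Ring R]

/-- Vanishing of `Ext^i_R(N, M)` for left `R`-modules. -/
def ExtVanishes (N M : ModuleCat.{0} R) (i : ℕ) : Prop :=
  Subsingleton (((Ext ℤ (ModuleCat.{0} R) i).obj (op N)).obj M)

/-- A left `R`-module `N` is super finitely presented if it admits a resolution
`⋯ → F₁ → F₀ → N → 0` by finitely generated projective modules. -/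
def IsSuperFinitelyPresented (N : ModuleCat.{0} R) : Prop :=
  ∃ (F : ℕ → ModuleCat.{0} R) (d : ∀ n, F (n + 1) ⟶ F n) (ε : F 0 ⟶ N),
    (∀ n, Module.Finite R (F n)) ∧ (∀ n, Module.Projective R (F n)) ∧
    Function.Surjective ε ∧ Function.Exact (d 0) ε ∧
    ∀ n, Function.Exact (d (n + 1)) (d n)

/-- `M` is weak injective if `Ext¹_R(N, M) = 0` for every super finitely presented `N`. -/
def IsWeakInjective (M : ModuleCat.{0} R) : Prop :=
  ∀ N : ModuleCat.{0} R, IsSuperFinitelyPresented R N → ExtVanishes R N M 1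

namespace WeakInjAux

variable {R}

/-- Build a `ProjectiveResolution` from explicit resolution data in `ModuleCat`. -/
def resolutionOfData (N : ModuleCat.{0} R) (F : ℕ → ModuleCat.{0} R)
    (d : ∀ n, F (n + 1) ⟶ F n) (ε : F 0 ⟶ N)
    (hproj : ∀ n, Module.Projective R (F n))
    (hsurj : Function.Surjective ε) (h0 : Function.Exact (d 0) ε)
    (hd : ∀ n, Function.Exact (d (n + 1)) (d n)) :
    ProjectiveResolution N where
  complex := ChainComplex.of F d (fun n => ModuleCat.hom_ext (LinearMap.ext fun x =>
    (hd n).apply_apply_eq_zero x))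
  projective n := (IsProjective.iff_projective (F n)).mp (hproj n)
  π := (ChainComplex.toSingle₀Equiv _ _).symm ⟨ε, by
    show (ChainComplex.of F d _).d (0 + 1) 0 ≫ ε = 0
    refine (congrArg (· ≫ ε) (ChainComplex.of_d F d 0)).trans ?_
    exact ModuleCat.hom_ext (LinearMap.ext fun x => h0.apply_apply_eq_zero x)⟩
  quasiIso := ⟨fun n => by
    cases n with
    | zero =>
      rw [ChainComplex.quasiIsoAt₀_iff, ShortComplex.quasiIso_iff_of_zeros']
      · refine ⟨?_, ?_⟩
        · rw [ShortComplex.moduleCat_exact_iff]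
          intro x hx
          refine h0 x |>.mp ?_
          simp [HomologicalComplex.shortComplexFunctor',
            ChainComplex.toSingle₀Equiv_symm_apply_f_zero] at hx; exact hx
        · exact (ModuleCat.epi_iff_surjective ε).mpr hsurj
      all_goals rfl
    | succ n =>
      rw [quasiIsoAt_iff_exactAt' _ _ (ChainComplex.exactAt_succ_single_obj _ _)]
      rw [HomologicalComplex.exactAt_iff' _ (n + 1 + 1) (n + 1) n (by simp) (by simp)]
      rw [ShortComplex.moduleCat_exact_iff]
      intro x hx
      have hx' : d n x = 0 := by
        simp [HomologicalComplex.sc', HomologicalComplex.shortComplexFunctor',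
          ChainComplex.of_d] at hx; exact hx
      obtain ⟨y, hy⟩ := (hd n x).mp hx'
      refine ⟨y, ?_⟩
      simp [HomologicalComplex.sc', HomologicalComplex.shortComplexFunctor',
        ChainComplex.of_d] at hy ⊢; exact hy⟩

lemma subsingleton_of_isZero {E : ModuleCat ℤ} (h : CategoryTheory.Limits.IsZero E) :
    Subsingleton E := by
  refine ⟨fun a b => ?_⟩
  have h1 : (𝟙 E : E ⟶ E) = 0 := h.eq_of_src _ _
  calc a = (𝟙 E : E ⟶ E) a := rfl
    _ = (0 : E ⟶ E) a := by rw [h1]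
    _ = (𝟙 E : E ⟶ E) b := by rw [h1]; rfl
    _ = b := rfl

/-- `Ext¹(N, M)` vanishes iff the Hom complex of a projective resolution is exact
in degree `1`. -/
lemma extVanishes_one_iff (N M : ModuleCat.{0} R) (P : ProjectiveResolution N) :
    ExtVanishes R N M 1 ↔
      ∀ φ : P.complex.X 1 ⟶ M, P.complex.d 2 1 ≫ φ = 0 →
        ∃ ψ : P.complex.X 0 ⟶ M, P.complex.d 1 0 ≫ ψ = φ := by
  have e := P.isoExt (R := ℤ) 1 M
  have h1 : ExtVanishes R N M 1 ↔ (P.complex.linearYonedaObj ℤ M).ExactAt 1 := by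
    rw [HomologicalComplex.exactAt_iff_isZero_homology]
    constructor
    · intro h
      have : Subsingleton (((Ext ℤ (ModuleCat.{0} R) 1).obj (op N)).obj M) := h
      exact (ModuleCat.isZero_of_subsingleton _).of_iso e.symm
    · intro h
      exact subsingleton_of_isZero (h.of_iso e)
  rw [h1, HomologicalComplex.exactAt_iff' _ 0 1 2 (by simp) (by simp),
    ShortComplex.moduleCat_exact_iff]
  have hd12 : ∀ φ : P.complex.X 1 ⟶ M,
      (P.complex.linearYonedaObj ℤ M).d 1 2 φ = P.complex.d 2 1 ≫ φ := fun φ => by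
    rw [ChainComplex.linearYonedaObj_d]; rfl
  have hd01 : ∀ ψ : P.complex.X 0 ⟶ M,
      (P.complex.linearYonedaObj ℤ M).d 0 1 ψ = P.complex.d 1 0 ≫ ψ := fun ψ => by
    rw [ChainComplex.linearYonedaObj_d]; rfl
  constructor
  · intro h φ hφ
    obtain ⟨ψ, hψ⟩ := h φ (by
      show (P.complex.linearYonedaObj ℤ M).d 1 2 φ = 0
      rw [hd12]; exact hφ)
    exact ⟨ψ, (hd01 ψ).symm.trans hψ⟩
  · intro h φ hφ
    obtain ⟨ψ, hψ⟩ := h φ (by rw [show ((P.complex.linearYonedaObj ℤ M).sc' 0 1 2).g φ =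
      P.complex.d 2 1 ≫ φ from hd12 φ] at hφ; exact hφ)
    exact ⟨ψ, by rw [show ((P.complex.linearYonedaObj ℤ M).sc' 0 1 2).f ψ =
      P.complex.d 1 0 ≫ ψ from hd01 ψ]; exact hψ⟩

/-- Extension along a map, given injectivity. -/
lemma exists_extension {M : ModuleCat.{0} R} (hM : Module.Injective R M)
    {A B : ModuleCat.{0} R} (f : A ⟶ B) (φ : A ⟶ M)
    (h : LinearMap.ker f.hom ≤ LinearMap.ker φ.hom) :
    ∃ ψ : B ⟶ M, f ≫ ψ = φ := by
  set g₀ : LinearMap.range f.hom →ₗ[R] M :=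
    ((LinearMap.ker f.hom).liftQ φ.hom h).comp (f.hom.quotKerEquivRange).symm.toLinearMap with hg₀
  obtain ⟨ψ, hψ⟩ := hM.out (LinearMap.range f.hom).subtype Subtype.val_injective g₀
  refine ⟨ModuleCat.ofHom ψ, ModuleCat.hom_ext (LinearMap.ext fun a => ?_)⟩
  have h1 : ψ (f.hom a) = g₀ ⟨f.hom a, LinearMap.mem_range_self f.hom a⟩ :=
    hψ ⟨f.hom a, LinearMap.mem_range_self f.hom a⟩
  have h2 : (f.hom.quotKerEquivRange).symm ⟨f.hom a, LinearMap.mem_range_self f.hom a⟩ =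
      Submodule.Quotient.mk a := by
    apply (f.hom.quotKerEquivRange).injective
    apply Subtype.ext
    simp [LinearMap.quotKerEquivRange_apply_mk]
  show ψ (f.hom a) = φ.hom a
  rw [h1, hg₀, LinearMap.comp_apply, LinearEquiv.coe_toLinearMap, h2,
    Submodule.liftQ_apply]

/-- An injective module is weak injective. -/
lemma extVanishes_of_injective {M : ModuleCat.{0} R} (hM : Module.Injective R M)
    (N : ModuleCat.{0} R) : ExtVanishes R N M 1 := by
  set P := ProjectiveResolution.of N with hP
  rw [extVanishes_one_iff N M P]
  intro φ hφ
  refine exists_extension hM _ _ ?_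
  intro x hx
  have hex := P.complex_exactAt_succ 0
  rw [HomologicalComplex.exactAt_iff' _ 2 1 0 (by simp) (by simp),
    ShortComplex.moduleCat_exact_iff] at hex
  obtain ⟨y, hy⟩ := hex x hx
  show φ x = 0
  rw [← hy]
  exact congrFun (congrArg (fun (t : P.complex.X 2 ⟶ M) => ⇑t) hφ) y

variable (R) in
/-- One step of a resolution: a module `A` together with a map from a f.g. projective. -/
structure Tail where
  A : ModuleCat.{0} R
  B : ModuleCat.{0} R
  f : B ⟶ A
  finB : Module.Finite R B
  projB : Module.Projective R B

/-- The data of a finitely generated projective cover of a submodule `S ≤ A`. -/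
abbrev Next (A : ModuleCat.{0} R) (S : Submodule R A) :=
  {p : Σ B : ModuleCat.{0} R, B ⟶ A //
    Module.Finite R p.1 ∧ Module.Projective R p.1 ∧ LinearMap.range p.2.hom = S}

/-- Choose a f.g. free cover of a f.g. submodule. -/
def next (A : ModuleCat.{0} R) (S : Submodule R A) (hS : S.FG) : Next A S := by
  apply Classical.choice
  obtain ⟨n, str, hs⟩ := Submodule.fg_iff_exists_fin_generating_family.mp hS
  exact ⟨⟨⟨ModuleCat.of R (Fin n → R), ModuleCat.ofHom (Fintype.linearCombination R str :
    (Fin n → R) →ₗ[R] A)⟩, (inferInstance : Module.Finite R (Fin n → R)), Module.Projective.of_basis (Pi.basisFun R (Fin n)),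
    by rw [ModuleCat.hom_ofHom, Fintype.range_linearCombination]; exact hs⟩⟩

lemma fgKer (hR : IsNoetherianRing R) (t : Tail R) : (LinearMap.ker t.f.hom).FG := by
  haveI := t.finB
  haveI : IsNoetherian R R := hR
  exact IsNoetherian.noetherian _

/-- The next step of the resolution. -/
def step (hR : IsNoetherianRing R) (t : Tail R) : Tail R where
  A := t.B
  B := (next t.B (LinearMap.ker t.f.hom) (fgKer hR t)).1.1
  f := (next t.B (LinearMap.ker t.f.hom) (fgKer hR t)).1.2
  finB := (next t.B (LinearMap.ker t.f.hom) (fgKer hR t)).2.1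
  projB := (next t.B (LinearMap.ker t.f.hom) (fgKer hR t)).2.2.1

lemma range_step (hR : IsNoetherianRing R) (t : Tail R) :
    LinearMap.range (step hR t).f.hom = LinearMap.ker t.f.hom :=
  (next t.B (LinearMap.ker t.f.hom) (fgKer hR t)).2.2.2

/-- The chain of steps of the resolution. -/
def chain (hR : IsNoetherianRing R) (t0 : Tail R) : ℕ → Tail R :=
  fun n => Nat.rec t0 (fun _ t => step hR t) n

end WeakInjAux

/-- If `R` is left Noetherian, then a left `R`-module is weak injective iff it is injective. -/
theorem stmt2 (hR : IsNoetherianRing R) (M : ModuleCat.{0} R) :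
    IsWeakInjective R M ↔ Module.Injective R M := by
  constructor
  · intro hWI
    haveI : IsNoetherian R R := hR
    refine Module.Baer.injective ?_
    intro I g
    classical
    let N : ModuleCat.{0} R := ModuleCat.of R (R ⧸ I)
    let F0 : ModuleCat.{0} R := ModuleCat.of R R
    let p := WeakInjAux.next F0 I (IsNoetherian.noetherian I)
    let t0 : WeakInjAux.Tail R := ⟨F0, p.1.1, p.1.2, p.2.1, p.2.2.1⟩
    have ht0 : LinearMap.range t0.f.hom = I := p.2.2.2
    let c := WeakInjAux.chain hR t0
    let F : ℕ → ModuleCat.{0} R := fun n => (c n).A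
    let d : ∀ n, F (n + 1) ⟶ F n := fun n => (c n).f
    let ε : F 0 ⟶ N := ModuleCat.ofHom (I.mkQ : R →ₗ[R] R ⧸ I)
    have hfin : ∀ n, Module.Finite R (F n) := by
      intro n
      cases n with
      | zero => exact (inferInstance : Module.Finite R R)
      | succ n => exact (c n).finB
    have hproj : ∀ n, Module.Projective R (F n) := by
      intro n
      cases n with
      | zero => exact (inferInstance : Module.Projective R R)
      | succ n => exact (c n).projB
    have hsurj : Function.Surjective ε := Submodule.mkQ_surjective I
    have hkerε : LinearMap.ker ε.hom = I := Submodule.ker_mkQ I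
    have h0 : Function.Exact (d 0) ε := by
      rw [LinearMap.exact_iff (f := (d 0).hom) (g := ε.hom)]
      rw [hkerε]
      exact ht0.symm
    have hrs : ∀ n, LinearMap.range (d (n + 1)).hom = LinearMap.ker (d n).hom := fun n =>
      WeakInjAux.range_step hR (c n)
    have hd : ∀ n, Function.Exact (d (n + 1)) (d n) := fun n =>
      LinearMap.exact_iff.mpr (hrs n).symm
    have hsfp : IsSuperFinitelyPresented R N := ⟨F, d, ε, hfin, hproj, hsurj, h0, hd⟩
    have hvan := hWI N hsfp
    let P := WeakInjAux.resolutionOfData N F d ε hproj hsurj h0 hd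
    rw [WeakInjAux.extVanishes_one_iff N M P] at hvan
    have hmem : ∀ x, d 0 x ∈ I := fun x => by
      rw [← ht0]; exact ⟨x, rfl⟩
    let φ : F 1 ⟶ M := ModuleCat.ofHom (g.comp ((d 0).hom.codRestrict I hmem) : F 1 →ₗ[R] M)
    have hD1 : P.complex.d 2 1 = d 1 := ChainComplex.of_d F d 1
    have hD0 : P.complex.d 1 0 = d 0 := ChainComplex.of_d F d 0
    have hφ : P.complex.d 2 1 ≫ φ = 0 := by
      rw [hD1]
      refine ModuleCat.hom_ext (LinearMap.ext fun x => ?_)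
      have h1 : d 0 (d 1 x) = 0 := (hd 0).apply_apply_eq_zero x
      have h2 : ((d 0).hom.codRestrict I hmem) (d 1 x) = 0 := by
        apply Subtype.ext
        exact h1
      show g (((d 0).hom.codRestrict I hmem) (d 1 x)) = 0
      rw [h2, map_zero]
    obtain ⟨ψ, hψ⟩ := hvan φ hφ
    rw [hD0] at hψ
    refine ⟨(ψ.hom : R →ₗ[R] M), fun x hx => ?_⟩
    have hx' : x ∈ LinearMap.range (d 0).hom := by
      show x ∈ LinearMap.range t0.f.hom
      rw [ht0]; exact hx
    obtain ⟨y, hy⟩ := hx'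
    have h3 : ψ (d 0 y) = φ y := congrFun (congrArg (fun (t : F 1 ⟶ M) => ⇑t) hψ) y
    have h4 : ((d 0).hom.codRestrict I hmem) y = ⟨x, hx⟩ := by
      apply Subtype.ext
      exact hy
    calc ψ x = ψ (d 0 y) := by rw [hy]
      _ = φ y := h3
      _ = g ⟨x, hx⟩ := by show g _ = _; rw [h4]
  · intro hInj N _
    exact WeakInjAux.extVanishes_of_injective hInj N
end
end

section
/- If M is a Gorenstein weak injective R-module, then Ext^i_R(N, M) = 0 for every super finitely presented R-module N of finite projective dimension and every i ≥ 1. -/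
open CategoryTheory Opposite

noncomputable section

variable (R : Type) [Ring R]

/-- `N` is super finitely presented of finite projective dimension, i.e. admits a finite
resolution `0 → Fₙ → ⋯ → F₀ → N → 0` by finitely generated projective modules. -/
def IsSFPOfFinitePd (N : ModuleCat.{0} R) : Prop :=
  ∃ (n : ℕ) (F : ℕ → ModuleCat.{0} R) (d : ∀ k, F (k + 1) ⟶ F k) (ε : F 0 ⟶ N),
    (∀ k, Module.Finite R (F k)) ∧ (∀ k, Module.Projective R (F k)) ∧
    Function.Surjective ε ∧ Function.Exact (d 0) ε ∧
    (∀ k, Function.Exact (d (k + 1)) (d k)) ∧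
    ∀ k, n < k → Subsingleton (F k)

/-- `M` is Gorenstein weak injective: there is an exact sequence
`⋯ → W₁ → W₀ → W⁰ → W¹ → ⋯` of weak injective modules (indexed here by `ℤ`) with
`M = Coker(W₁ → W₀)` (witnessed by a surjection `π : W 0 → M` and an injection
`ι : M → W 1` with `π ≫ ι = d 0`), which stays exact after applying `Hom_R(N, -)`
for every super finitely presented `N` of finite projective dimension. -/
def IsGorensteinWeakInjective (M : ModuleCat.{0} R) : Prop :=
  ∃ (W : ℤ → ModuleCat.{0} R) (d : ∀ n : ℤ, W n ⟶ W (n + 1))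
      (π : W 0 ⟶ M) (ι : M ⟶ W 1),
    (∀ n, IsWeakInjective R (W n)) ∧
    (∀ n, Function.Exact (d n) (d (n + 1))) ∧
    Function.Surjective π ∧ Function.Injective ι ∧ π ≫ ι = d 0 ∧
    Function.Exact (d (-1)) π ∧
    ∀ N : ModuleCat.{0} R, IsSFPOfFinitePd R N →
      ∀ (n : ℤ) (g : N ⟶ W (n + 1)), g ≫ d (n + 1) = 0 → ∃ f : N ⟶ W n, f ≫ d n = g


section AuxGWI

open Limits

variable {R}


structure ResData (N : ModuleCat.{0} R) where
  F : ℕ → ModuleCat.{0} R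
  d : ∀ n, F (n + 1) ⟶ F n
  ε : F 0 ⟶ N
  hproj : ∀ n, Module.Projective R (F n)
  hsurj : Function.Surjective ε
  hex0 : Function.Exact (d 0) ε
  hex : ∀ n, Function.Exact (d (n + 1)) (d n)

namespace ResData
variable {N : ModuleCat.{0} R} (D : ResData N)

def cx : ChainComplex (ModuleCat.{0} R) ℕ :=
  ChainComplex.of D.F D.d (fun n => by ext x; exact (D.hex n).apply_apply_eq_zero x)

@[simp] lemma cx_X (n : ℕ) : D.cx.X n = D.F n := rfl
@[simp] lemma cx_d (n : ℕ) : D.cx.d (n + 1) n = D.d n := ChainComplex.of_d _ _ n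

def sc2 : ShortComplex (ModuleCat.{0} R) :=
  ShortComplex.mk (D.d 0) D.ε (by ext x; exact D.hex0.apply_apply_eq_zero x)

lemma sc2_exact : D.sc2.Exact :=
  (ShortComplex.ShortExact.moduleCat_exact_iff_function_exact _).2 D.hex0

lemma sc2_epi : Epi D.sc2.g := (ModuleCat.epi_iff_surjective _).2 D.hsurj

def pr : ProjectiveResolution N where
  complex := D.cx
  projective := fun n => (IsProjective.iff_projective (D.F n)).mp (D.hproj n)
  π := (ChainComplex.toSingle₀Equiv _ _).symm
    ⟨D.ε, by rw [show D.cx.d 1 0 = D.d 0 from D.cx_d 0]; ext x;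
             exact D.hex0.apply_apply_eq_zero x⟩
  quasiIso := ⟨fun n => by
    cases n with
    | zero =>
      rw [ChainComplex.quasiIsoAt₀_iff, ShortComplex.quasiIso_iff_of_zeros']
      · refine (ShortComplex.exact_and_epi_g_iff_of_iso ?_).2 ⟨D.sc2_exact, D.sc2_epi⟩
        refine ShortComplex.isoMk (Iso.refl _) (Iso.refl _) (Iso.refl _) ?_ ?_
        · dsimp [sc2]
          simp [ChainComplex.toSingle₀Equiv]
          rfl
        · dsimp [sc2]
          simp [ChainComplex.toSingle₀Equiv]
          rfl
      all_goals rfl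
    | succ n =>
      rw [quasiIsoAt_iff_exactAt']
      · rw [D.cx.exactAt_iff' (n + 2) (n + 1) n (by simp) (by simp)]
        rw [ShortComplex.moduleCat_exact_iff]
        intro x hx
        rw [show (D.cx.sc' (n+2) (n+1) n).g = D.d n from D.cx_d n] at hx
        obtain ⟨y, hy⟩ := ((D.hex n) x).mp hx
        exact ⟨y, by rw [show (D.cx.sc' (n+2) (n+1) n).f = D.d (n+1) from D.cx_d (n+1)]; exact hy⟩
      · apply ChainComplex.exactAt_succ_single_obj⟩

end ResData

lemma ModuleCat.subsingleton_iff_isZero {S : Type} [Ring S] (M : ModuleCat.{0} S) :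
    Subsingleton M ↔ IsZero M := by
  constructor
  · intro h; exact ModuleCat.isZero_of_subsingleton M
  · intro h
    have h0 : (𝟙 M : M ⟶ M) = 0 := (IsZero.iff_id_eq_zero M).mp h
    refine ⟨fun a b => ?_⟩
    calc a = (𝟙 M : M ⟶ M) a := rfl
    _ = (0 : M ⟶ M) a := by rw [h0]
    _ = (0 : M ⟶ M) b := by rw [show ((0 : M ⟶ M) : M → M) a = 0 from rfl, show ((0 : M ⟶ M) : M → M) b = 0 from rfl]
    _ = (𝟙 M : M ⟶ M) b := by rw [h0]
    _ = b := rfl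

namespace ResData
variable {N : ModuleCat.{0} R} (D : ResData N)

lemma yon_d_apply (Y : ModuleCat.{0} R) (k : ℕ) (g : D.F k ⟶ Y) :
    ((D.cx.linearYonedaObj ℤ Y).d k (k+1)) g = D.d k ≫ g := by
  simp [ChainComplex.linearYonedaObj]
  rfl

end ResData

namespace ResData
variable {N : ModuleCat.{0} R} (D : ResData N)

lemma extVanishes_iff (Y : ModuleCat.{0} R) (k : ℕ) :
    Subsingleton (((Ext ℤ (ModuleCat.{0} R) (k+1)).obj (op N)).obj Y) ↔
      ∀ f : D.F (k+1) ⟶ Y, D.d (k+1) ≫ f = 0 → ∃ g : D.F k ⟶ Y, D.d k ≫ g = f := by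
  rw [ModuleCat.subsingleton_iff_isZero]
  have e := D.pr.isoExt (R := ℤ) (k+1) Y
  rw [show D.pr.complex = D.cx from rfl] at e
  constructor
  · intro h f hf
    have hz : IsZero ((D.cx.linearYonedaObj ℤ Y).homology (k+1)) := h.of_iso e.symm
    have hex : (D.cx.linearYonedaObj ℤ Y).ExactAt (k+1) :=
      (HomologicalComplex.exactAt_iff_isZero_homology _ _).mpr hz
    rw [(D.cx.linearYonedaObj ℤ Y).exactAt_iff' k (k+1) (k+2) (by simp) (by simp),
      ShortComplex.moduleCat_exact_iff] at hex
    obtain ⟨g, hg⟩ := hex f (by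
      show ((D.cx.linearYonedaObj ℤ Y).d (k+1) (k+2)) f = 0
      rw [D.yon_d_apply]; exact hf)
    exact ⟨g, (D.yon_d_apply Y k g).symm.trans hg⟩
  · intro h
    refine IsZero.of_iso ?_ e
    rw [← HomologicalComplex.exactAt_iff_isZero_homology]
    rw [(D.cx.linearYonedaObj ℤ Y).exactAt_iff' k (k+1) (k+2) (by simp) (by simp),
      ShortComplex.moduleCat_exact_iff]
    intro f hf
    obtain ⟨g, hg⟩ := h f ((D.yon_d_apply Y (k+1) f).symm.trans hf)
    exact ⟨g, by show ((D.cx.linearYonedaObj ℤ Y).d k (k+1)) g = f; rw [D.yon_d_apply]; exact hg⟩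

end ResData


lemma exact_cast {A A' B B' C C' : ModuleCat.{0} R} (hA : A = A') (hB : B = B') (hC : C = C')
    (f : A ⟶ B) (g : B ⟶ C) (f' : A' ⟶ B') (g' : B' ⟶ C')
    (hf : f' = eqToHom hA.symm ≫ f ≫ eqToHom hB) (hg : g' = eqToHom hB.symm ≫ g ≫ eqToHom hC)
    (h : Function.Exact f g) : Function.Exact f' g' := by
  subst hA hB hC; simp only [eqToHom_refl, Category.id_comp, Category.comp_id] at hf hg
  subst hf hg; exact h

lemma conj_congr (W : ℤ → ModuleCat.{0} R) (d : ∀ n : ℤ, W n ⟶ W (n + 1)) {m m' : ℤ}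
    (h : m = m') {A B : ModuleCat.{0} R} (hA : A = W m) (hA' : A = W m')
    (hB : W (m + 1) = B) (hB' : W (m' + 1) = B) :
    eqToHom hA ≫ d m ≫ eqToHom hB = eqToHom hA' ≫ d m' ≫ eqToHom hB' := by
  subst h; rfl

lemma lift_range {P A B : ModuleCat.{0} R} (hP : Module.Projective R P) (α : A ⟶ B)
    (u : P ⟶ B) (hu : ∀ x, u x ∈ LinearMap.range α.hom) : ∃ v : P ⟶ A, v ≫ α = u := by
  letI : Module.Projective R P := hP
  obtain ⟨v, hv⟩ := Module.projective_lifting_property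
    (α.hom.rangeRestrict) (u.hom.codRestrict (LinearMap.range α.hom) hu)
    (LinearMap.surjective_rangeRestrict α.hom)
  refine ⟨ModuleCat.ofHom v, ?_⟩
  ext x
  have := congrArg (fun w => (w x : B)) hv
  simpa using this

lemma hom_zero_of_subsingleton {A B : ModuleCat.{0} R} (h : Subsingleton A) (f : A ⟶ B) :
    f = 0 := by
  ext x
  rw [Subsingleton.elim x 0]
  simp

lemma chain_lift (A : ℕ → ModuleCat.{0} R) (dA : ∀ j, A (j + 1) ⟶ A j)
    (hAproj : ∀ j, Module.Projective R (A j))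
    (hdd : ∀ j, dA (j + 1) ≫ dA j = 0)
    (B : ℕ → ModuleCat.{0} R) (eB : ∀ j, B (j + 1) ⟶ B j) (M : ModuleCat.{0} R)
    (π : B 0 ⟶ M) (hπs : Function.Surjective π)
    (hexB0 : Function.Exact (eB 0) π) (hexB : ∀ j, Function.Exact (eB (j + 1)) (eB j))
    (f : A 1 ⟶ M) (hf : dA 1 ≫ f = 0) :
    ∃ h : ∀ j, A (j + 1) ⟶ B j, h 0 ≫ π = f ∧ ∀ j, h (j + 1) ≫ eB j = dA (j + 1) ≫ h j := by
  -- base map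
  obtain ⟨h0, hh0⟩ : ∃ h0 : A 1 ⟶ B 0, h0 ≫ π = f := by
    letI : Module.Projective R (A 1) := hAproj 1
    obtain ⟨h0, hh0⟩ := Module.projective_lifting_property π.hom f.hom hπs
    exact ⟨ModuleCat.ofHom h0, ModuleCat.hom_ext hh0⟩
  have hbase : ∀ x, (dA 1 ≫ h0) x ∈ LinearMap.range (eB 0).hom := by
    intro x
    have : π ((dA 1 ≫ h0) x) = 0 := by
      have : (dA 1 ≫ h0) ≫ π = 0 := by rw [Category.assoc, hh0]; exact hf
      exact congrArg (fun w => w x) this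
    exact (hexB0 _).mp this
  -- recursive construction
  let motive : ℕ → Type := fun j =>
    {hj : A (j + 1) ⟶ B j // ∀ x, (dA (j + 1) ≫ hj) x ∈ LinearMap.range (eB j).hom}
  have stepEx : ∀ j (m : motive j), ∃ p : motive (j + 1), p.1 ≫ eB j = dA (j + 1) ≫ m.1 := by
    intro j ⟨hj, hjmem⟩
    obtain ⟨h', hh'⟩ := lift_range (hAproj (j + 2)) (eB j) (dA (j + 1) ≫ hj) hjmem
    have hmem : ∀ x, (dA (j + 2) ≫ h') x ∈ LinearMap.range (eB (j + 1)).hom := by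
      intro x
      have hz : (dA (j + 2) ≫ h') ≫ eB j = 0 := by
        rw [Category.assoc, hh', ← Category.assoc, hdd, Limits.zero_comp]
      have : eB j ((dA (j + 2) ≫ h') x) = 0 := congrArg (fun w => w x) hz
      exact ((hexB j) _).mp this
    exact ⟨⟨h', hmem⟩, hh'⟩
  let step : ∀ j, motive j → motive (j + 1) := fun j m => Classical.choose (stepEx j m)
  have hstep : ∀ j m, (step j m).1 ≫ eB j = dA (j + 1) ≫ m.1 :=
    fun j m => Classical.choose_spec (stepEx j m)
  let HH : ∀ j, motive j := fun j => Nat.rec ⟨h0, hbase⟩ step j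
  refine ⟨fun j => (HH j).1, hh0, fun j => ?_⟩
  show (step j (HH j)).1 ≫ eB j = dA (j + 1) ≫ (HH j).1
  exact hstep j (HH j)

lemma descend (A : ℕ → ModuleCat.{0} R) (dA : ∀ j, A (j + 1) ⟶ A j)
    (B : ℕ → ModuleCat.{0} R) (eB : ∀ j, B (j + 1) ⟶ B j)
    (hee : ∀ j, eB (j + 1) ≫ eB j = 0)
    (h : ∀ j, A (j + 1) ⟶ B j)
    (hrel : ∀ j, h (j + 1) ≫ eB j = dA (j + 1) ≫ h j)
    (hfact : ∀ j (u : A (j + 1) ⟶ B j), dA (j + 1) ≫ u = 0 → ∃ t : A j ⟶ B j, dA j ≫ t = u)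
    (J : ℕ) (hJ : Subsingleton (A (J + 1))) :
    ∃ (t : A 0 ⟶ B 0) (s : A 1 ⟶ B 1), h 0 = dA 0 ≫ t + s ≫ eB 0 := by
  set P : ℕ → Prop := fun j =>
    ∃ (t : A j ⟶ B j) (s : A (j + 1) ⟶ B (j + 1)), h j = dA j ≫ t + s ≫ eB j with hP
  have hbase : P J := by
    refine ⟨0, 0, ?_⟩
    rw [hom_zero_of_subsingleton hJ (h J)]
    simp
  have hstep : ∀ j, P (j + 1) → P j := by
    intro j ⟨t', s', hts⟩
    have hu : dA (j + 1) ≫ (h j - t' ≫ eB j) = 0 := by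
      have h1 : dA (j + 1) ≫ t' = h (j + 1) - s' ≫ eB (j + 1) := by
        rw [hts]; abel
      calc dA (j + 1) ≫ (h j - t' ≫ eB j)
          = dA (j + 1) ≫ h j - (dA (j + 1) ≫ t') ≫ eB j := by
            rw [Preadditive.comp_sub, Category.assoc]
        _ = dA (j + 1) ≫ h j - (h (j + 1) - s' ≫ eB (j + 1)) ≫ eB j := by rw [h1]
        _ = dA (j + 1) ≫ h j - h (j + 1) ≫ eB j + s' ≫ eB (j + 1) ≫ eB j := by
            rw [Preadditive.sub_comp, Category.assoc]; abel
        _ = 0 := by rw [hrel j, hee j, comp_zero]; abel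
    obtain ⟨t, ht⟩ := hfact j (h j - t' ≫ eB j) hu
    exact ⟨t, t', by rw [ht]; abel⟩
  have key : ∀ m, P (J - m) := by
    intro m
    induction m with
    | zero => exact hbase
    | succ m ih =>
      by_cases hc : J - m = (J - (m + 1)) + 1
      · exact hstep _ (hc ▸ ih)
      · have : J - (m + 1) = J - m := by omega
        rw [this]; exact ih
  have := key J
  rw [Nat.sub_self] at this
  exact this


lemma factor_of_weakInjective {N Y : ModuleCat.{0} R}
    (F : ℕ → ModuleCat.{0} R) (d : ∀ n, F (n + 1) ⟶ F n) (ε : F 0 ⟶ N)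
    (hfin : ∀ n, Module.Finite R (F n)) (hproj : ∀ n, Module.Projective R (F n))
    (hex : ∀ n, Function.Exact (d (n + 1)) (d n))
    (hY : IsWeakInjective R Y) (m : ℕ)
    (u : F (m + 1) ⟶ Y) (hu : d (m + 1) ≫ u = 0) : ∃ t : F m ⟶ Y, d m ≫ t = u := by
  let Q : ModuleCat.{0} R := ModuleCat.of R (F m ⧸ LinearMap.range (d m).hom)
  let εQ : F m ⟶ Q := ModuleCat.ofHom (LinearMap.range (d m).hom).mkQ
  have hexQ : Function.Exact (d m) εQ := by
    intro x
    constructor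
    · intro hx
      have : x ∈ LinearMap.range (d m).hom := by
        rwa [show εQ x = Submodule.Quotient.mk x from rfl, Submodule.Quotient.mk_eq_zero] at hx
      obtain ⟨y, hy⟩ := this
      exact ⟨y, hy⟩
    · intro hx
      obtain ⟨y, hy⟩ := hx
      rw [show εQ x = Submodule.Quotient.mk x from rfl, Submodule.Quotient.mk_eq_zero]
      exact ⟨y, hy⟩
  let DQ : ResData Q := ⟨fun i => F (m + i), fun i => d (m + i), εQ,
    fun i => hproj _, Submodule.mkQ_surjective _, hexQ, fun i => hex (m + i)⟩
  have hsfp : IsSuperFinitelyPresented R Q := ⟨fun i => F (m + i), fun i => d (m + i), εQ,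
    fun i => hfin _, fun i => hproj _, Submodule.mkQ_surjective _, hexQ, fun i => hex (m + i)⟩
  exact (DQ.extVanishes_iff Y 0).mp (hY Q hsfp) u hu

end AuxGWI

/-- If `M` is Gorenstein weak injective, then `Ext^i_R(N, M) = 0` for every super finitely
presented `N` of finite projective dimension and every `i ≥ 1`. -/
theorem stmt4 (M N : ModuleCat.{0} R) (hM : IsGorensteinWeakInjective R M)
    (hN : IsSFPOfFinitePd R N) :
    ∀ i : ℕ, 1 ≤ i → ExtVanishes R N M i := by
  obtain ⟨n, F, d, ε, hfin, hproj, hsurj, hex0, hex, hvan⟩ := hN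
  obtain ⟨W, dW, π, ι, hWwi, hWex, hπs, hιi, hcomp, hexπ, hlift⟩ := hM
  intro i hi
  obtain ⟨k, rfl⟩ : ∃ k, i = k + 1 := ⟨i - 1, by omega⟩
  let D : ResData N := ⟨F, d, ε, hproj, hsurj, hex0, hex⟩
  refine (D.extVanishes_iff M k).mpr ?_
  intro f hf
  obtain ⟨e, he0, heS⟩ : ∃ e : ∀ j : ℕ, W (-((j + 1 : ℕ) : ℤ)) ⟶ W (-(j : ℤ)),
      Function.Exact (e 0) π ∧ ∀ j, Function.Exact (e (j + 1)) (e j) := by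
    refine ⟨fun j =>
      eqToHom (congrArg W (show -((j + 1 : ℕ) : ℤ) = -(j : ℤ) - 1 by push_cast; ring)) ≫
        dW (-(j : ℤ) - 1) ≫
          eqToHom (congrArg W (show -(j : ℤ) - 1 + 1 = -(j : ℤ) by ring)), ?_, ?_⟩
    · refine exact_cast (A := W (-1)) (B := W (-1 + 1)) (C := M)
        (rfl) (rfl) (rfl) (dW (-1)) π _ _ ?_ ?_ hexπ
      · exact conj_congr W dW (show -((0 : ℕ) : ℤ) - 1 = -1 by norm_num) _ _ _ _
      · rfl
    · intro j
      refine exact_cast (A := W (-(j : ℤ) - 2)) (B := W (-(j : ℤ) - 2 + 1))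
        (C := W (-(j : ℤ) - 2 + 1 + 1))
        (congrArg W (by push_cast; ring)) (congrArg W (by push_cast; ring))
        (congrArg W (by push_cast; ring))
        (dW (-(j : ℤ) - 2)) (dW (-(j : ℤ) - 2 + 1)) _ _ ?_ ?_ (hWex (-(j : ℤ) - 2))
      · exact conj_congr W dW
          (show -(((j + 1) : ℕ) : ℤ) - 1 = -(j : ℤ) - 2 by push_cast; ring) _ _ _ _
      · exact conj_congr W dW
          (show -((j : ℕ) : ℤ) - 1 = -(j : ℤ) - 2 + 1 by push_cast; ring) _ _ _ _
  have hdd : ∀ j : ℕ, d (k + (j + 1)) ≫ d (k + j) = 0 := by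
    intro j
    ext x
    exact (hex (k + j)).apply_apply_eq_zero x
  obtain ⟨h, hh0, hhrel⟩ := chain_lift (fun j => F (k + j)) (fun j => d (k + j))
    (fun j => hproj _) hdd (fun j => W (-(j : ℤ))) e M π hπs he0 heS f hf
  have hee : ∀ j, e (j + 1) ≫ e j = 0 := by
    intro j
    ext x
    exact (heS j).apply_apply_eq_zero x
  have hfact : ∀ (j : ℕ) (u : F (k + (j + 1)) ⟶ W (-(j : ℤ))),
      d (k + (j + 1)) ≫ u = 0 → ∃ t : F (k + j) ⟶ W (-(j : ℤ)), d (k + j) ≫ t = u :=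
    fun j u hu =>
      factor_of_weakInjective F d ε hfin hproj hex (hWwi (-(j : ℤ))) (k + j) u hu
  obtain ⟨t, s, hts⟩ := descend (fun j => F (k + j)) (fun j => d (k + j))
    (fun j => W (-(j : ℤ))) e hee h hhrel hfact (n + 1)
    (hvan (k + (n + 1) + 1) (by omega))
  refine ⟨t ≫ π, ?_⟩
  have he0π : e 0 ≫ π = 0 := by
    ext x
    exact he0.apply_apply_eq_zero x
  rw [← hh0, hts, Preadditive.add_comp, Category.assoc s, he0π, Limits.comp_zero, add_zero,
    Category.assoc]
  rfl
end
end

section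
/- Every Gorenstein flat right R-module is Gorenstein weak flat. -/
open CategoryTheory Opposite

noncomputable section

variable (R : Type) [Ring R]

/-- The subgroup of relations defining `M ⊗_R N` as a quotient of `M ⊗_ℤ N`,
for a right `R`-module `M` and a left `R`-module `N`. -/
def tensorRel (M : Type) [AddCommGroup M] [Module Rᵐᵒᵖ M]
    (N : Type) [AddCommGroup N] [Module R N] : Submodule ℤ (TensorProduct ℤ M N) :=
  Submodule.span ℤ
    {x | ∃ (m : M) (r : R) (n : N),
      x = (MulOpposite.op r • m) ⊗ₜ[ℤ] n - m ⊗ₜ[ℤ] (r • n)}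

/-- The tensor product `M ⊗_R N` of a right `R`-module and a left `R`-module. -/
abbrev RTensor (M : Type) [AddCommGroup M] [Module Rᵐᵒᵖ M]
    (N : Type) [AddCommGroup N] [Module R N] :=
  TensorProduct ℤ M N ⧸ tensorRel R M N

variable {M N N' M' : Type} [AddCommGroup M] [Module Rᵐᵒᵖ M] [AddCommGroup N] [Module R N]
  [AddCommGroup N'] [Module R N'] [AddCommGroup M'] [Module Rᵐᵒᵖ M']

/-- The map `M ⊗_R N → M ⊗_R N'` induced by an `R`-linear map `N → N'`. -/
def rtMapRight (g : N →ₗ[R] N') : RTensor R M N →ₗ[ℤ] RTensor R M N' :=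
  Submodule.mapQ _ _ (LinearMap.lTensor M g.toAddMonoidHom.toIntLinearMap) (by
    rw [tensorRel, Submodule.span_le]
    rintro _ ⟨m, r, n, rfl⟩
    simp only [SetLike.mem_coe, Submodule.mem_comap, map_sub, LinearMap.lTensor_tmul]
    refine Submodule.subset_span ⟨m, r, g n, ?_⟩
    erw [map_sub, LinearMap.lTensor_tmul, LinearMap.lTensor_tmul]
    simp [tensorRel, map_smul])

/-- The map `M ⊗_R N → M' ⊗_R N` induced by a right `R`-linear map `M → M'`. -/
def rtMapLeft (f : M →ₗ[Rᵐᵒᵖ] M') : RTensor R M N →ₗ[ℤ] RTensor R M' N :=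
  Submodule.mapQ _ _ (LinearMap.rTensor N f.toAddMonoidHom.toIntLinearMap) (by
    rw [tensorRel, Submodule.span_le]
    rintro _ ⟨m, r, n, rfl⟩
    simp only [SetLike.mem_coe, Submodule.mem_comap, map_sub, LinearMap.rTensor_tmul]
    refine Submodule.subset_span ⟨f m, r, n, ?_⟩
    erw [map_sub, LinearMap.rTensor_tmul, LinearMap.rTensor_tmul]
    simp [tensorRel, map_smul])

/-- A right `R`-module `M` is weak flat if `Tor₁^R(M, N) = 0` for every super finitely
presented left `R`-module `N`: for every short exact sequence `0 → K → P → N → 0` with `P`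
projective, the induced map `M ⊗_R K → M ⊗_R P` is injective. -/
def IsWeakFlat (M : ModuleCat.{0} Rᵐᵒᵖ) : Prop :=
  ∀ N : ModuleCat.{0} R, IsSuperFinitelyPresented R N →
    ∀ (K P : ModuleCat.{0} R) (i : K ⟶ P) (p : P ⟶ N),
      Module.Projective R P → Function.Injective i → Function.Surjective p →
        Function.Exact i p →
          Function.Injective (rtMapRight R (M := M) (i.hom : K →ₗ[R] P))

/-- `M` is Gorenstein weak flat: there is an exact sequence
`⋯ → W₁ → W₀ → W⁰ → W¹ → ⋯` of weak flat right modules with `M = Coker(W₁ → W₀)`,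
which stays exact after applying `- ⊗_R N` for every super finitely presented left
module `N` of finite projective dimension. -/
def IsGorensteinWeakFlat (M : ModuleCat.{0} Rᵐᵒᵖ) : Prop :=
  ∃ (W : ℤ → ModuleCat.{0} Rᵐᵒᵖ) (d : ∀ n : ℤ, W n ⟶ W (n + 1))
      (π : W 0 ⟶ M) (ι : M ⟶ W 1),
    (∀ n, IsWeakFlat R (W n)) ∧
    (∀ n, Function.Exact (d n) (d (n + 1))) ∧
    Function.Surjective π ∧ Function.Injective ι ∧ π ≫ ι = d 0 ∧
    Function.Exact (d (-1)) π ∧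
    ∀ N : ModuleCat.{0} R, IsSFPOfFinitePd R N → ∀ n : ℤ,
      Function.Exact (rtMapLeft R (N := N) ((d n).hom : W n →ₗ[Rᵐᵒᵖ] W (n + 1)))
        (rtMapLeft R (N := N) ((d (n + 1)).hom : W (n + 1) →ₗ[Rᵐᵒᵖ] W (n + 1 + 1)))

/-- A right `R`-module `M` is flat if `M ⊗_R -` preserves injections of left modules. -/
def IsFlatRight (M : ModuleCat.{0} Rᵐᵒᵖ) : Prop :=
  ∀ (A B : ModuleCat.{0} R) (f : A ⟶ B), Function.Injective f →
    Function.Injective (rtMapRight R (M := M) (f.hom : A →ₗ[R] B))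

/-- `M` is Gorenstein flat: there is an exact sequence of flat right modules
`⋯ → F₁ → F₀ → F⁰ → F¹ → ⋯` with `M = Coker(F₁ → F₀)` which stays exact after
applying `- ⊗_R I` for every injective left `R`-module `I`. -/
def IsGorensteinFlat (M : ModuleCat.{0} Rᵐᵒᵖ) : Prop :=
  ∃ (W : ℤ → ModuleCat.{0} Rᵐᵒᵖ) (d : ∀ n : ℤ, W n ⟶ W (n + 1))
      (π : W 0 ⟶ M) (ι : M ⟶ W 1),
    (∀ n, IsFlatRight R (W n)) ∧
    (∀ n, Function.Exact (d n) (d (n + 1))) ∧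
    Function.Surjective π ∧ Function.Injective ι ∧ π ≫ ι = d 0 ∧
    Function.Exact (d (-1)) π ∧
    ∀ I : ModuleCat.{0} R, Module.Injective R I → ∀ n : ℤ,
      Function.Exact (rtMapLeft R (N := I) ((d n).hom : W n →ₗ[Rᵐᵒᵖ] W (n + 1)))
        (rtMapLeft R (N := I) ((d (n + 1)).hom : W (n + 1) →ₗ[Rᵐᵒᵖ] W (n + 1 + 1)))

namespace GWFaux

section basic

variable {X X' : Type} [AddCommGroup X] [Module Rᵐᵒᵖ X] [AddCommGroup X'] [Module Rᵐᵒᵖ X']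
variable {A B C : Type} [AddCommGroup A] [Module R A] [AddCommGroup B] [Module R B]
  [AddCommGroup C] [Module R C]

lemma rtR_mk_tmul (g : A →ₗ[R] B) (m : X) (a : A) :
    rtMapRight R (M := X) g (Submodule.Quotient.mk (m ⊗ₜ[ℤ] a))
      = Submodule.Quotient.mk (m ⊗ₜ[ℤ] g a) := by
  rw [rtMapRight]; erw [Submodule.mapQ_apply]
  rfl

lemma rtL_mk_tmul (f : X →ₗ[Rᵐᵒᵖ] X') (m : X) (a : A) :
    rtMapLeft R (N := A) f (Submodule.Quotient.mk (m ⊗ₜ[ℤ] a))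
      = Submodule.Quotient.mk (f m ⊗ₜ[ℤ] a) := by
  rw [rtMapLeft]; erw [Submodule.mapQ_apply]
  rfl

lemma mk_op_smul (m : X) (r : R) (a : A) :
    (Submodule.Quotient.mk ((MulOpposite.op r • m) ⊗ₜ[ℤ] a) : RTensor R X A)
      = Submodule.Quotient.mk (m ⊗ₜ[ℤ] (r • a)) := by
  rw [Submodule.Quotient.eq]
  exact Submodule.subset_span ⟨m, r, a, rfl⟩

lemma rt_induction {P : RTensor R X A → Prop} (h0 : P 0)
    (htm : ∀ (m : X) (a : A), P (Submodule.Quotient.mk (m ⊗ₜ[ℤ] a)))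
    (hadd : ∀ x y, P x → P y → P (x + y)) : ∀ x, P x := by
  intro x
  obtain ⟨t, rfl⟩ := Submodule.Quotient.mk_surjective _ x
  induction t using TensorProduct.induction_on with
  | zero => simpa using h0
  | tmul m a => exact htm m a
  | add s t hs ht => rw [Submodule.Quotient.mk_add]; exact hadd _ _ hs ht

lemma rtL_rtR_comm (f : X →ₗ[Rᵐᵒᵖ] X') (g : A →ₗ[R] B) (x : RTensor R X A) :
    rtMapLeft R (N := B) f (rtMapRight R g x)
      = rtMapRight R g (rtMapLeft R (N := A) f x) := by
  induction x using rt_induction with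
  | h0 => simp
  | htm m a => rw [rtR_mk_tmul, rtL_mk_tmul, rtL_mk_tmul, rtR_mk_tmul]
  | hadd x y hx hy => rw [map_add, map_add, hx, hy, map_add, map_add]

lemma rtR_comp (g : A →ₗ[R] B) (g' : B →ₗ[R] C) (x : RTensor R X A) :
    rtMapRight R (M := X) (g'.comp g) x = rtMapRight R g' (rtMapRight R g x) := by
  induction x using rt_induction with
  | h0 => simp
  | htm m a => rw [rtR_mk_tmul, rtR_mk_tmul, rtR_mk_tmul]; rfl
  | hadd x y hx hy => rw [map_add, map_add, hx, hy, map_add]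

lemma rtL_comp (f : X →ₗ[Rᵐᵒᵖ] X') {X'' : Type} [AddCommGroup X''] [Module Rᵐᵒᵖ X'']
    (f' : X' →ₗ[Rᵐᵒᵖ] X'') (x : RTensor R X A) :
    rtMapLeft R (N := A) (f'.comp f) x
      = rtMapLeft R (N := A) f' (rtMapLeft R (N := A) f x) := by
  induction x using rt_induction with
  | h0 => simp
  | htm m a => rw [rtL_mk_tmul, rtL_mk_tmul, rtL_mk_tmul]; rfl
  | hadd x y hx hy => rw [map_add, map_add, hx, hy, map_add]

lemma rtL_zero (x : RTensor R X A) :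
    rtMapLeft R (N := A) (0 : X →ₗ[Rᵐᵒᵖ] X') x = 0 := by
  induction x using rt_induction with
  | h0 => simp
  | htm m a => rw [rtL_mk_tmul]; simp [TensorProduct.zero_tmul]
  | hadd x y hx hy => rw [map_add, hx, hy, add_zero]

lemma rtR_id (x : RTensor R X A) :
    rtMapRight R (M := X) (LinearMap.id : A →ₗ[R] A) x = x := by
  induction x using rt_induction with
  | h0 => simp
  | htm m a => rw [rtR_mk_tmul]; rfl
  | hadd x y hx hy => rw [map_add, hx, hy]

lemma rtR_comp_zero {i : A →ₗ[R] B} {p : B →ₗ[R] C} (h : p.comp i = 0)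
    (x : RTensor R X A) : rtMapRight R (M := X) p (rtMapRight R i x) = 0 := by
  rw [← rtR_comp, h]
  induction x using rt_induction with
  | h0 => simp
  | htm m a => rw [rtR_mk_tmul]; simp [TensorProduct.tmul_zero]
  | hadd x y hx hy => rw [map_add, hx, hy, add_zero]

lemma rtR_surj (g : A →ₗ[R] B) (hg : Function.Surjective g) :
    Function.Surjective (rtMapRight R (M := X) g) := by
  intro y
  induction y using rt_induction with
  | h0 => exact ⟨0, map_zero _⟩
  | htm m b =>
      obtain ⟨a, rfl⟩ := hg b
      exact ⟨Submodule.Quotient.mk (m ⊗ₜ[ℤ] a), rtR_mk_tmul R g m a⟩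
  | hadd x y hx hy =>
      obtain ⟨x', rfl⟩ := hx
      obtain ⟨y', rfl⟩ := hy
      exact ⟨x' + y', map_add _ _ _⟩

/-- Right exactness of `X ⊗_R -`. -/
lemma exact_rtR (i : A →ₗ[R] B) (p : B →ₗ[R] C)
    (hp : Function.Surjective p) (hex : Function.Exact i p) :
    Function.Exact (rtMapRight R (M := X) i) (rtMapRight R (M := X) p) := by
  classical
  choose s hs using hp
  set J : Submodule ℤ (RTensor R X B) :=
    LinearMap.range (rtMapRight R (M := X) i) with hJ
  set q2 : TensorProduct ℤ X B →ₗ[ℤ] (RTensor R X B ⧸ J) :=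
    J.mkQ.comp (tensorRel R X B).mkQ with hq2
  have hq2mk : ∀ t : TensorProduct ℤ X B,
      q2 t = J.mkQ (Submodule.Quotient.mk t) := fun t => rfl
  have key : ∀ (m : X) (x y : B), p x = p y →
      q2 (m ⊗ₜ[ℤ] x) = q2 (m ⊗ₜ[ℤ] y) := by
    intro m x y hxy
    rw [← sub_eq_zero, ← map_sub, ← TensorProduct.tmul_sub]
    obtain ⟨k, hk⟩ := (hex (x - y)).mp (by rw [map_sub, hxy, sub_self])
    rw [hq2mk, Submodule.mkQ_apply, Submodule.Quotient.mk_eq_zero, hJ]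
    exact ⟨Submodule.Quotient.mk (m ⊗ₜ[ℤ] k), by rw [rtR_mk_tmul, hk]⟩
  let b : X →ₗ[ℤ] C →ₗ[ℤ] (RTensor R X B ⧸ J) := LinearMap.mk₂ ℤ
    (fun m c => q2 (m ⊗ₜ[ℤ] s c))
    (fun m m' c => by
      show q2 ((m + m') ⊗ₜ[ℤ] s c) = q2 (m ⊗ₜ[ℤ] s c) + q2 (m' ⊗ₜ[ℤ] s c)
      rw [TensorProduct.add_tmul, map_add])
    (fun z m c => by
      show q2 ((z • m) ⊗ₜ[ℤ] s c) = z • q2 (m ⊗ₜ[ℤ] s c)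
      rw [← TensorProduct.smul_tmul', map_smul])
    (fun m c1 c2 => by
      show q2 (m ⊗ₜ[ℤ] s (c1 + c2)) = q2 (m ⊗ₜ[ℤ] s c1) + q2 (m ⊗ₜ[ℤ] s c2)
      rw [key m (s (c1 + c2)) (s c1 + s c2) (by rw [hs, map_add, hs, hs]),
        TensorProduct.tmul_add, map_add])
    (fun z m c => by
      show q2 (m ⊗ₜ[ℤ] s (z • c)) = z • q2 (m ⊗ₜ[ℤ] s c)
      rw [key m (s (z • c)) (z • s c) (by rw [hs, map_zsmul, hs]),
        TensorProduct.tmul_smul, map_smul])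
  have hb : ∀ (m : X) (c : C), TensorProduct.lift b (m ⊗ₜ[ℤ] c) = q2 (m ⊗ₜ[ℤ] s c) :=
    fun m c => by rw [TensorProduct.lift.tmul]; rfl
  have hrel : tensorRel R X C ≤ LinearMap.ker (TensorProduct.lift b).toAddMonoidHom.toIntLinearMap := by
    rw [tensorRel, Submodule.span_le]
    rintro _ ⟨m, r, c, rfl⟩
    simp only [SetLike.mem_coe, LinearMap.mem_ker, AddMonoidHom.coe_toIntLinearMap, LinearMap.toAddMonoidHom_coe, map_sub, hb]
    have h1 : q2 ((MulOpposite.op r • m) ⊗ₜ[ℤ] s c) = q2 (m ⊗ₜ[ℤ] (r • s c)) := by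
      rw [hq2mk, hq2mk, mk_op_smul]
    rw [h1, key m (r • s c) (s (r • c)) (by rw [map_smul, hs, hs]), sub_self]
  let ψ := (tensorRel R X C).liftQ (TensorProduct.lift b).toAddMonoidHom.toIntLinearMap hrel
  have hψ : ∀ t : TensorProduct ℤ X B,
      ψ (rtMapRight R (M := X) p (Submodule.Quotient.mk t))
        = J.mkQ (Submodule.Quotient.mk t) := by
    intro t
    induction t using TensorProduct.induction_on with
    | zero => simp
    | tmul m x =>
        rw [rtR_mk_tmul]
        show (tensorRel R X C).liftQ (TensorProduct.lift b).toAddMonoidHom.toIntLinearMap hrel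
          (Submodule.Quotient.mk (m ⊗ₜ[ℤ] p x)) = _
        rw [Submodule.liftQ_apply, AddMonoidHom.coe_toIntLinearMap, LinearMap.toAddMonoidHom_coe, hb]
        exact key m (s (p x)) x (hs (p x))
    | add u v hu hv =>
        rw [Submodule.Quotient.mk_add, map_add, map_add, hu, hv, map_add]
  intro y
  constructor
  · intro hy
    obtain ⟨t, rfl⟩ := Submodule.Quotient.mk_surjective _ y
    have h1 := hψ t
    rw [hy, map_zero] at h1
    have h2 : (Submodule.Quotient.mk t : RTensor R X B) ∈ J := by
      rwa [eq_comm, Submodule.mkQ_apply, Submodule.Quotient.mk_eq_zero] at h1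
    obtain ⟨x, hx⟩ := h2
    exact ⟨x, hx⟩
  · rintro ⟨x, rfl⟩
    exact rtR_comp_zero R (LinearMap.ext fun z => (hex (i z)).mpr ⟨z, rfl⟩) x

end basic

/-- Exactness of the complex `W ⊗_R A`. -/
def TensExact (W : ℤ → ModuleCat.{0} Rᵐᵒᵖ) (d : ∀ n : ℤ, W n ⟶ W (n + 1))
    (A : Type) [AddCommGroup A] [Module R A] : Prop :=
  ∀ n : ℤ, Function.Exact
    (rtMapLeft R (N := A) ((d n).hom : W n →ₗ[Rᵐᵒᵖ] W (n + 1)))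
    (rtMapLeft R (N := A) ((d (n + 1)).hom : W (n + 1) →ₗ[Rᵐᵒᵖ] W (n + 1 + 1)))

section complexes

variable {W : ℤ → ModuleCat.{0} Rᵐᵒᵖ} {d : ∀ n : ℤ, W n ⟶ W (n + 1)}
variable {A B : Type} [AddCommGroup A] [Module R A] [AddCommGroup B] [Module R B]

lemma rtL_d_comp_zero (hd : ∀ n, Function.Exact (d n) (d (n + 1))) (n : ℤ)
    (x : RTensor R (W n) A) :
    rtMapLeft R (N := A) ((d (n + 1)).hom : W (n + 1) →ₗ[Rᵐᵒᵖ] W (n + 1 + 1))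
      (rtMapLeft R (N := A) ((d n).hom : W n →ₗ[Rᵐᵒᵖ] W (n + 1)) x) = 0 := by
  have h0 : (((d (n + 1)).hom : W (n + 1) →ₗ[Rᵐᵒᵖ] W (n + 1 + 1)).comp
      ((d n).hom : W n →ₗ[Rᵐᵒᵖ] W (n + 1))) = 0 :=
    LinearMap.ext fun w => (hd n (d n w)).mpr ⟨w, rfl⟩
  rw [← rtL_comp, h0, rtL_zero]

lemma tensExact_retract (hd : ∀ n, Function.Exact (d n) (d (n + 1)))
    (s : A →ₗ[R] B) (r : B →ₗ[R] A) (hrs : r.comp s = LinearMap.id)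
    (hB : TensExact R W d B) : TensExact R W d A := by
  intro n y
  constructor
  · intro hy
    have h1 : rtMapLeft R (N := B) ((d (n + 1)).hom : W (n + 1) →ₗ[Rᵐᵒᵖ] W (n + 1 + 1))
        (rtMapRight R s y) = 0 := by
      rw [rtL_rtR_comm, hy, map_zero]
    obtain ⟨z, hz⟩ := (hB n _).mp h1
    refine ⟨rtMapRight R r z, ?_⟩
    have h2 : rtMapRight R r (rtMapRight R s y) = y := by
      rw [← rtR_comp, hrs, rtR_id]
    rw [rtL_rtR_comm, hz, h2]
  · rintro ⟨x, rfl⟩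
    exact rtL_d_comp_zero R hd n x

end complexes

section pi

variable {X X' : Type} [AddCommGroup X] [Module Rᵐᵒᵖ X] [AddCommGroup X'] [Module Rᵐᵒᵖ X']
variable {k : ℕ}

/-- Evaluation `X ⊗_R R^k → X` at coordinate `j`. -/
def evQ (j : Fin k) : RTensor R X (Fin k → R) →ₗ[ℤ] X :=
  (tensorRel R X (Fin k → R)).liftQ
    (TensorProduct.lift (LinearMap.mk₂ ℤ (fun m v => MulOpposite.op (v j) • m)
      (fun m m' v => smul_add _ m m')
      (fun z m v => smul_comm _ _ _)
      (fun m v v' => by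
        show MulOpposite.op ((v + v') j) • m
          = MulOpposite.op (v j) • m + MulOpposite.op (v' j) • m
        rw [Pi.add_apply, MulOpposite.op_add, add_smul])
      (fun z m v => by
        show MulOpposite.op ((z • v) j) • m = z • (MulOpposite.op (v j) • m)
        rw [Pi.smul_apply, MulOpposite.op_smul, smul_assoc]))).toAddMonoidHom.toIntLinearMap
    (by
      rw [tensorRel, Submodule.span_le]
      rintro _ ⟨m, r, v, rfl⟩
      simp only [SetLike.mem_coe, LinearMap.mem_ker, AddMonoidHom.coe_toIntLinearMap, LinearMap.toAddMonoidHom_coe, map_sub, TensorProduct.lift.tmul,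
        LinearMap.mk₂_apply]
      rw [smul_smul, ← MulOpposite.op_mul, Pi.smul_apply, smul_eq_mul, sub_self])

lemma evQ_mk_tmul (j : Fin k) (m : X) (v : Fin k → R) :
    evQ (R := R) j (Submodule.Quotient.mk (m ⊗ₜ[ℤ] v)) = MulOpposite.op (v j) • m := by
  rw [evQ, Submodule.liftQ_apply, AddMonoidHom.coe_toIntLinearMap, LinearMap.toAddMonoidHom_coe, TensorProduct.lift.tmul, LinearMap.mk₂_apply]

/-- The inverse map `X^k → X ⊗_R R^k`. -/
def betaQ (u : Fin k → X) : RTensor R X (Fin k → R) :=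
  ∑ j, Submodule.Quotient.mk (u j ⊗ₜ[ℤ] Pi.single j (1 : R))

lemma betaQ_add (u u' : Fin k → X) :
    betaQ (R := R) (u + u') = betaQ (R := R) u + betaQ (R := R) u' := by
  unfold betaQ
  rw [← Finset.sum_add_distrib]
  refine Finset.sum_congr rfl fun j _ => ?_
  rw [Pi.add_apply, ← Submodule.Quotient.mk_add, ← TensorProduct.add_tmul]

lemma evQ_betaQ (i : Fin k) (u : Fin k → X) :
    evQ (R := R) i (betaQ (R := R) u) = u i := by
  rw [betaQ, map_sum]
  have h1 : ∀ j : Fin k, evQ (R := R) i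
      (Submodule.Quotient.mk (u j ⊗ₜ[ℤ] Pi.single j (1 : R)))
        = if i = j then u j else 0 := by
    intro j
    rw [evQ_mk_tmul]
    by_cases h : i = j
    · subst h; rw [if_pos rfl, Pi.single_eq_same, MulOpposite.op_one, one_smul]
    · rw [if_neg h, Pi.single_eq_of_ne h, MulOpposite.op_zero, zero_smul]
  rw [Finset.sum_congr rfl fun j _ => h1 j]
  simp

lemma betaQ_evQ (x : RTensor R X (Fin k → R)) :
    betaQ (R := R) (fun j => evQ (R := R) j x) = x := by
  induction x using rt_induction with
  | h0 =>
      have : (fun j : Fin k => evQ (R := R) (X := X) j 0) = fun _ => (0 : X) := by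
        funext j; rw [map_zero]
      rw [this]
      show (∑ j : Fin k, (Submodule.Quotient.mk ((0 : X) ⊗ₜ[ℤ] Pi.single j (1 : R))
        : RTensor R X (Fin k → R))) = 0
      simp [TensorProduct.zero_tmul]
  | htm m v =>
      have h1 : (fun j => evQ (R := R) j (Submodule.Quotient.mk (m ⊗ₜ[ℤ] v)))
          = fun j => MulOpposite.op (v j) • m := by
        funext j; rw [evQ_mk_tmul]
      unfold betaQ
      rw [h1]
      have h2 : ∀ j : Fin k, (Submodule.Quotient.mk ((MulOpposite.op (v j) • m)
          ⊗ₜ[ℤ] Pi.single j (1 : R)) : RTensor R X (Fin k → R))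
            = Submodule.Quotient.mk (m ⊗ₜ[ℤ] Pi.single j (v j)) := by
        intro j
        rw [mk_op_smul, ← Pi.single_smul, smul_eq_mul, mul_one]
      rw [Finset.sum_congr rfl fun j _ => h2 j]
      have h3 : (∑ j, (Submodule.Quotient.mk (m ⊗ₜ[ℤ] Pi.single j (v j)) :
          RTensor R X (Fin k → R)))
            = Submodule.Quotient.mk (m ⊗ₜ[ℤ] ∑ j, Pi.single j (v j)) := by
        rw [TensorProduct.tmul_sum]
        exact (map_sum (Submodule.mkQ _) _ _).symm
      rw [h3, Finset.univ_sum_single]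
  | hadd x y hx hy =>
      have h1 : (fun j => evQ (R := R) j (x + y))
          = (fun j => evQ (R := R) j x) + fun j => evQ (R := R) j y := by
        funext j; rw [map_add]; rfl
      rw [h1, betaQ_add, hx, hy]

lemma evQ_natural (j : Fin k) (f : X →ₗ[Rᵐᵒᵖ] X') (x : RTensor R X (Fin k → R)) :
    evQ (R := R) j (rtMapLeft R (N := Fin k → R) f x) = f (evQ (R := R) j x) := by
  induction x using rt_induction with
  | h0 => rw [map_zero, map_zero, map_zero]; exact (map_zero f).symm
  | htm m v => rw [rtL_mk_tmul, evQ_mk_tmul, evQ_mk_tmul, map_smul]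
  | hadd x y hx hy => rw [map_add, map_add, map_add, hx, hy, map_add]

lemma betaQ_natural (f : X →ₗ[Rᵐᵒᵖ] X') (u : Fin k → X) :
    rtMapLeft R (N := Fin k → R) f (betaQ (R := R) u)
      = betaQ (R := R) (fun j => f (u j)) := by
  unfold betaQ
  rw [map_sum]
  exact Finset.sum_congr rfl fun j _ => rtL_mk_tmul R f (u j) _

variable {W : ℤ → ModuleCat.{0} Rᵐᵒᵖ} {d : ∀ n : ℤ, W n ⟶ W (n + 1)}

lemma tensExact_pi (hd : ∀ n, Function.Exact (d n) (d (n + 1))) (k : ℕ) :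
    TensExact R W d (Fin k → R) := by
  intro n y
  constructor
  · intro hy
    have hv : ∀ j : Fin k, ((d (n + 1)).hom : W (n + 1) →ₗ[Rᵐᵒᵖ] W (n + 1 + 1))
        (evQ (R := R) j y) = 0 := by
      intro j
      rw [← evQ_natural R j ((d (n + 1)).hom : W (n + 1) →ₗ[Rᵐᵒᵖ] W (n + 1 + 1)) y, hy, map_zero]
    choose u hu using fun j => (hd n _).mp (hv j)
    refine ⟨betaQ (R := R) u, ?_⟩
    rw [← betaQ_evQ (R := R) y, betaQ_natural]
    exact congrArg _ (funext fun j => hu j)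
  · rintro ⟨x, rfl⟩
    exact rtL_d_comp_zero R hd n x

end pi

section main

variable {W : ℤ → ModuleCat.{0} Rᵐᵒᵖ} {d : ∀ n : ℤ, W n ⟶ W (n + 1)}

lemma tensExact_of_fg_projective (hd : ∀ n, Function.Exact (d n) (d (n + 1)))
    (P : ModuleCat.{0} R) [Module.Finite R P] [Module.Projective R P] :
    TensExact R W d P := by
  obtain ⟨k, f, g, hf, hg, hfg⟩ := Module.Finite.exists_comp_eq_id_of_projective R P
  exact tensExact_retract R hd g f hfg (tensExact_pi R hd k)

lemma tensExact_of_ses (hflat : ∀ n, IsFlatRight R (W n))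
    (hd : ∀ n, Function.Exact (d n) (d (n + 1)))
    {K P N : ModuleCat.{0} R} (i : K ⟶ P) (p : P ⟶ N)
    (hi : Function.Injective i) (hp : Function.Surjective p)
    (hex : Function.Exact i p)
    (hK : TensExact R W d K) (hP : TensExact R W d P) : TensExact R W d N := by
  have hpi : p.hom.comp i.hom = 0 :=
    LinearMap.ext fun z => (hex (i z)).mpr ⟨z, rfl⟩
  intro n y
  constructor
  · intro hy
    obtain ⟨x', hx'⟩ := rtR_surj R (X := W (n + 1)) p.hom hp y
    have h1 : rtMapRight R (M := W (n + 1 + 1)) p.hom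
        (rtMapLeft R (N := P) ((d (n + 1)).hom : W (n + 1) →ₗ[Rᵐᵒᵖ] W (n + 1 + 1)) x') = 0 := by
      rw [← rtL_rtR_comm, hx']
      exact hy
    obtain ⟨kk, hk⟩ :=
      (exact_rtR R (X := W (n + 1 + 1)) i.hom p.hom hp hex _).mp h1
    have h2 : rtMapLeft R (N := K)
        ((d (n + 1 + 1)).hom : W (n + 1 + 1) →ₗ[Rᵐᵒᵖ] W (n + 1 + 1 + 1)) kk = 0 := by
      apply hflat (n + 1 + 1 + 1) K P i hi
      rw [map_zero, ← rtL_rtR_comm, hk, rtL_d_comp_zero R hd (n + 1) x']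
    obtain ⟨k', hk'⟩ := (hK (n + 1) kk).mp h2
    have h3 : rtMapLeft R (N := P) ((d (n + 1)).hom : W (n + 1) →ₗ[Rᵐᵒᵖ] W (n + 1 + 1))
        (x' - rtMapRight R (M := W (n + 1)) i.hom k') = 0 := by
      rw [map_sub, rtL_rtR_comm, hk', hk, sub_self]
    obtain ⟨y', hy'⟩ := (hP n _).mp h3
    refine ⟨rtMapRight R (M := W n) p.hom y', ?_⟩
    rw [rtL_rtR_comm, hy', map_sub, rtR_comp_zero R hpi, sub_zero, hx']
  · rintro ⟨x, rfl⟩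
    exact rtL_d_comp_zero R hd n x

lemma mainInd (hflat : ∀ n, IsFlatRight R (W n))
    (hd : ∀ n, Function.Exact (d n) (d (n + 1))) :
    ∀ (n : ℕ) (N : ModuleCat.{0} R) (F : ℕ → ModuleCat.{0} R)
      (dd : ∀ k, F (k + 1) ⟶ F k) (ε : F 0 ⟶ N),
      (∀ k, Module.Finite R (F k)) → (∀ k, Module.Projective R (F k)) →
      Function.Surjective ε → Function.Exact (dd 0) ε →
      (∀ k, Function.Exact (dd (k + 1)) (dd k)) → (∀ k, n < k → Subsingleton (F k)) →
      TensExact R W d N := by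
  intro n
  induction n with
  | zero =>
      intro N F dd ε hfin hproj hsurj hex0 hexk hvan
      haveI := hvan 1 one_pos
      have hinj : Function.Injective ε := by
        rw [injective_iff_map_eq_zero]
        intro a ha
        obtain ⟨b, hb⟩ := (hex0 a).mp ha
        rw [← hb, Subsingleton.elim b 0, map_zero]
      let e := LinearEquiv.ofBijective ε.hom ⟨hinj, hsurj⟩
      haveI := hfin 0
      haveI := hproj 0
      exact tensExact_retract R hd (e.symm : N →ₗ[R] F 0) ε.hom
        (LinearMap.ext fun a => e.apply_symm_apply a)
        (tensExact_of_fg_projective R hd (F 0))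
  | succ n ih =>
      intro N F dd ε hfin hproj hsurj hex0 hexk hvan
      set Ksub := LinearMap.ker ε.hom with hKsub
      let K : ModuleCat.{0} R := ModuleCat.of R ↥Ksub
      have hd0 : ∀ x : F 1, ε.hom ((dd 0).hom x) = 0 :=
        fun x => (hex0 ((dd 0).hom x)).mpr ⟨x, rfl⟩
      let ε' : F 1 →ₗ[R] K :=
        (dd 0).hom.codRestrict Ksub hd0
      have hsurj' : Function.Surjective ε' := by
        rintro ⟨a, ha⟩
        obtain ⟨b, hb⟩ := (hex0 a).mp ha
        exact ⟨b, Subtype.ext hb⟩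
      have hex0' : Function.Exact (dd 1 : F (1 + 1) ⟶ F 1) (ModuleCat.ofHom ε' : F 1 ⟶ K) := by
        intro y
        rw [show ((ModuleCat.ofHom ε' : F 1 ⟶ K) y = 0) ↔ ((dd 0).hom y = 0) from
          ⟨fun h => congrArg Subtype.val h, fun h => Subtype.ext h⟩]
        exact hexk 0 y
      have hK : TensExact R W d K :=
        ih K (fun k => F (k + 1)) (fun k => dd (k + 1)) (ModuleCat.ofHom ε' : F 1 ⟶ K)
          (fun k => hfin (k + 1)) (fun k => hproj (k + 1)) hsurj' hex0'
          (fun k => hexk (k + 1)) (fun k hk => hvan (k + 1) (Nat.succ_lt_succ hk))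
      haveI := hfin 0
      haveI := hproj 0
      have hP := tensExact_of_fg_projective R (W := W) (d := d) hd (F 0)
      have hexKP : Function.Exact (ModuleCat.ofHom Ksub.subtype : K ⟶ F 0) (ε : F 0 ⟶ N) := by
        intro y
        constructor
        · intro h
          exact ⟨⟨y, h⟩, rfl⟩
        · rintro ⟨⟨a, ha⟩, rfl⟩
          exact ha
      exact tensExact_of_ses R hflat hd (K := K) (P := F 0) (N := N)
        (ModuleCat.ofHom Ksub.subtype : K ⟶ F 0) ε (Submodule.injective_subtype Ksub) hsurj hexKP hK hP

end main

end GWFaux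

/-- Every Gorenstein flat right `R`-module is Gorenstein weak flat. -/
theorem stmt10 (M : ModuleCat.{0} Rᵐᵒᵖ) (hM : IsGorensteinFlat R M) :
    IsGorensteinWeakFlat R M := by
  obtain ⟨W, d, π, ι, hflat, hd, hπ, hι, hcomp, hm1, _⟩ := hM
  refine ⟨W, d, π, ι, ?_, hd, hπ, hι, hcomp, hm1, ?_⟩
  · intro n N _ K P i p _ hi _ _
    exact hflat n K P i hi
  · intro N hN n
    obtain ⟨m, F, dd, ε, hfin, hproj, hsurj, hex0, hexk, hvan⟩ := hN
    exact GWFaux.mainInd R hflat hd m N F dd ε hfin hproj hsurj hex0 hexk hvan n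
end
end

section
/- If the left super finitely presented dimension of R is finite, i.e., sup{pd_R(M) : M super finitely presented} = n < ∞, then every Gorenstein weak injective R-module is weak injective. -/
open CategoryTheory Opposite

noncomputable section

variable (R : Type) [Ring R]

/-- `N` has projective dimension at most `n`: there is an exact sequence
`0 → Fₙ → ⋯ → F₀ → N → 0` with each `Fᵢ` projective. -/
def HasProjDimLE (N : ModuleCat.{0} R) (n : ℕ) : Prop :=
  ∃ (F : ℕ → ModuleCat.{0} R) (d : ∀ k, F (k + 1) ⟶ F k) (ε : F 0 ⟶ N),
    (∀ k, Module.Projective R (F k)) ∧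
    Function.Surjective ε ∧ Function.Exact (d 0) ε ∧
    (∀ k, Function.Exact (d (k + 1)) (d k)) ∧
    ∀ k, n < k → Subsingleton (F k)

namespace Stmt16Aux

variable {R : Type} [Ring R]

lemma subsingleton_of_iso {A B : ModuleCat.{0} ℤ} (e : A ≅ B)
    (h : Subsingleton B) : Subsingleton A := by
  constructor
  intro a b
  have hinv : ∀ x : A, e.inv (e.hom x) = x := fun x => ConcreteCategory.congr_hom e.hom_inv_id x
  rw [← hinv a, ← hinv b, Subsingleton.elim (e.hom a) (e.hom b)]

lemma subsingleton_of_isZero {A : ModuleCat.{0} ℤ} (h : CategoryTheory.Limits.IsZero A) :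
    Subsingleton A := by
  constructor
  intro a b
  have h0 : (𝟙 A) = (0 : A ⟶ A) := h.eq_of_src _ _
  calc a = (𝟙 A) a := rfl
    _ = (0 : A ⟶ A) b := by rw [h0]; rfl
    _ = b := by rw [← h0]; rfl

section Res

variable {N : ModuleCat.{0} R} (F : ℕ → ModuleCat.{0} R) (d : ∀ k, F (k + 1) ⟶ F k)
    (ε : F 0 ⟶ N)
    (hproj : ∀ k, Module.Projective R (F k))
    (hsurj : Function.Surjective ε) (hex0 : Function.Exact (d 0) ε)
    (hex : ∀ k, Function.Exact (d (k + 1)) (d k))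

def resComplex : ChainComplex (ModuleCat.{0} R) ℕ :=
  ChainComplex.of F d (fun k => by ext x; exact (hex k).apply_apply_eq_zero x)

lemma resComplex_d (k : ℕ) : (resComplex F d hex).d (k + 1) k = d k :=
  ChainComplex.of_d (V := ModuleCat.{0} R) (X := F) (d := d) k

/-- A projective resolution built from explicit resolution data. -/
def mkRes : ProjectiveResolution N where
  complex := resComplex F d hex
  projective := fun k => (IsProjective.iff_projective _).mp (hproj k)
  π := (ChainComplex.toSingle₀Equiv _ _).symm ⟨ε, by
    rw [show (resComplex F d hex).d 1 0 = d 0 from resComplex_d F d hex 0]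
    ext x
    exact hex0.apply_apply_eq_zero x⟩
  quasiIso := ⟨fun n => by
    cases n with
    | zero =>
      rw [ChainComplex.quasiIsoAt₀_iff, ShortComplex.quasiIso_iff_of_zeros' _ rfl rfl rfl]
      · have hπ0 : ((((resComplex F d hex).toSingle₀Equiv N).symm
            ⟨ε, by
              rw [show (resComplex F d hex).d 1 0 = d 0 from resComplex_d F d hex 0]
              ext x
              exact hex0.apply_apply_eq_zero x⟩).f 0) = ε :=
          ChainComplex.toSingle₀Equiv_symm_apply_f_zero _ _
        constructor
        · rw [ShortComplex.moduleCat_exact_iff]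
          intro x hx
          rw [show ((HomologicalComplex.shortComplexFunctor' (ModuleCat R)
                (ComplexShape.down ℕ) 1 0 0).map
              (((resComplex F d hex).toSingle₀Equiv N).symm ⟨ε, _⟩)).τ₂ x
              = (((resComplex F d hex).toSingle₀Equiv N).symm ⟨ε, _⟩).f 0 x from rfl,
            ConcreteCategory.congr_hom hπ0 x] at hx
          obtain ⟨y, hy⟩ := (hex0 x).mp hx
          refine ⟨y, ?_⟩
          show (resComplex F d hex).d 1 0 y = x
          rw [ConcreteCategory.congr_hom (resComplex_d F d hex 0) y]
          exact hy
        · show Epi ((((resComplex F d hex).toSingle₀Equiv N).symm ⟨ε, _⟩).f 0)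
          rw [ModuleCat.epi_iff_surjective, hπ0]
          exact hsurj
    | succ n =>
      rw [quasiIsoAt_iff_exactAt' _ _ (ChainComplex.exactAt_succ_single_obj _ _)]
      rw [HomologicalComplex.exactAt_iff' _ (n + 1 + 1) (n + 1) n (by simp) (by simp)]
      rw [ShortComplex.moduleCat_exact_iff]
      intro x hx
      have e2 : (resComplex F d hex).d (n+1) n x = d n x :=
        ConcreteCategory.congr_hom (resComplex_d F d hex n) x
      rw [show ((HomologicalComplex.sc' (resComplex F d hex) (n+1+1) (n+1) n).g) x
          = (resComplex F d hex).d (n+1) n x from rfl, e2] at hx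
      obtain ⟨y, hy⟩ := (hex n x).mp hx
      refine ⟨y, ?_⟩
      show (resComplex F d hex).d (n+1+1) (n+1) y = x
      rw [ConcreteCategory.congr_hom (resComplex_d F d hex (n+1)) y]
      exact hy⟩

include ε hproj hsurj hex0 hex in
/-- The bridge: `Ext^{i+1}(N, M)` vanishes iff cocycles on the resolution are coboundaries. -/
lemma bridge (M : ModuleCat.{0} R) (i : ℕ) :
    ExtVanishes R N M (i + 1) ↔
      ∀ g : F (i + 1) ⟶ M, d (i + 1) ≫ g = 0 → ∃ h : F i ⟶ M, d i ≫ h = g := by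
  let P : ProjectiveResolution N := mkRes F d ε hproj hsurj hex0 hex
  let K := P.complex.linearYonedaObj ℤ M
  have eIso : ((Ext ℤ (ModuleCat.{0} R) (i+1)).obj (op N)).obj M ≅ K.homology (i+1) :=
    P.isoExt (i+1) M
  have hd1 : P.complex.d (i+1+1) (i+1) = d (i+1) := resComplex_d F d hex (i+1)
  have hd0 : P.complex.d (i+1) i = d i := resComplex_d F d hex i
  constructor
  · intro hv g hg
    have hsub : Subsingleton (K.homology (i+1)) := subsingleton_of_iso eIso.symm hv
    have hexact : (K.sc' i (i+1) (i+1+1)).Exact :=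
      (HomologicalComplex.exactAt_iff' K i (i+1) (i+1+1) (by simp) (by simp)).1
        ((HomologicalComplex.exactAt_iff_isZero_homology K (i+1)).2
          (ModuleCat.isZero_of_subsingleton _))
    rw [ShortComplex.moduleCat_exact_iff] at hexact
    have hx : (K.sc' i (i+1) (i+1+1)).g g = 0 := by
      show P.complex.d (i+1+1) (i+1) ≫ g = 0
      rw [hd1]; exact hg
    obtain ⟨h, hh⟩ := hexact g hx
    refine ⟨h, ?_⟩
    have hcomp : P.complex.d (i+1) i ≫ h = g := hh
    rw [hd0] at hcomp
    exact hcomp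
  · intro hfac
    refine subsingleton_of_iso eIso ?_
    apply subsingleton_of_isZero
    rw [← HomologicalComplex.exactAt_iff_isZero_homology]
    rw [HomologicalComplex.exactAt_iff' K i (i+1) (i+1+1) (by simp) (by simp)]
    rw [ShortComplex.moduleCat_exact_iff]
    intro x hx
    have hx' : d (i+1) ≫ x = 0 := by
      rw [← hd1]; exact hx
    obtain ⟨h, hh⟩ := hfac x hx'
    refine ⟨h, ?_⟩
    show P.complex.d (i+1) i ≫ h = x
    rw [hd0]; exact hh

include d ε hproj hsurj hex0 hex in
/-- `Ext^i(N, X) = 0` when the `i`-th term of a projective resolution is trivial. -/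
lemma ext_vanish_high (X : ModuleCat.{0} R) {i : ℕ} (hsub : Subsingleton (F i)) :
    ExtVanishes R N X i := by
  let P : ProjectiveResolution N := mkRes F d ε hproj hsurj hex0 hex
  let K := P.complex.linearYonedaObj ℤ X
  refine subsingleton_of_iso (P.isoExt i X) ?_
  apply subsingleton_of_isZero
  rw [← HomologicalComplex.exactAt_iff_isZero_homology, HomologicalComplex.exactAt_iff]
  apply ShortComplex.exact_of_isZero_X₂
  have hs : Subsingleton ((K.sc i).X₂) := by
    have : Subsingleton (F i ⟶ X) := by
      constructor; intro f g; ext x; rw [Subsingleton.elim x 0, map_zero, map_zero]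
    exact this
  exact @ModuleCat.isZero_of_subsingleton _ _ _ hs

include ε hproj hsurj hex0 hex in
/-- Factoring cocycles valued in a weak injective module, at every level of the resolution. -/
lemma syzygy_bridge (hfin : ∀ k, Module.Finite R (F k)) (V : ModuleCat.{0} R)
    (hV : IsWeakInjective R V) :
    ∀ k, ∀ w : F (k+1) ⟶ V, d (k+1) ≫ w = 0 → ∃ h : F k ⟶ V, d k ≫ h = w := by
  intro k
  cases k with
  | zero =>
    have hNsfp : IsSuperFinitelyPresented R N := ⟨F, d, ε, hfin, hproj, hsurj, hex0, hex⟩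
    exact fun w hw => (bridge F d ε hproj hsurj hex0 hex V 0).1 (hV N hNsfp) w hw
  | succ k =>
    set S : ModuleCat.{0} R := ModuleCat.of R (LinearMap.range (d k).hom) with hS
    let ε' : F (k+1) ⟶ S := ModuleCat.ofHom (LinearMap.rangeRestrict (d k).hom)
    have hsurj' : Function.Surjective ε' := LinearMap.surjective_rangeRestrict _
    have hex0' : Function.Exact (d (k+1)) ε' := by
      intro y
      constructor
      · intro hy
        have : d k y = 0 := by
          have := congrArg (Subtype.val) hy
          exact this
        exact (hex k y).mp this
      · intro ⟨x, hx⟩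
        apply Subtype.ext
        show d k y = 0
        exact (hex k y).mpr ⟨x, hx⟩
    have hVS : ExtVanishes R S V 1 :=
      hV S ⟨fun j => F (k+1+j), fun j => d (k+1+j), ε', fun j => hfin _, fun j => hproj _,
        hsurj', hex0', fun j => hex _⟩
    exact fun w hw =>
      (bridge (fun j => F (k+1+j)) (fun j => d (k+1+j)) ε' (fun j => hproj _) hsurj'
        hex0' (fun j => hex _) V 0).1 hVS w hw

include ε hproj hsurj hex0 hex in
/-- The descent: correcting a lift to land in the kernel of the next differential. -/
lemma descent (hfin : ∀ k, Module.Finite R (F k))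
    (W : ℤ → ModuleCat.{0} R) (δ : ∀ m : ℤ, W m ⟶ W (m+1))
    (hWwi : ∀ m, IsWeakInjective R (W m))
    (hWex : ∀ m, Function.Exact (δ m) (δ (m+1)))
    {n : ℕ} (hpd : HasProjDimLE R N n) :
    ∀ t k : ℕ, n ≤ k + t → ∀ (m : ℤ) (u : F (k+1) ⟶ W m),
      d (k+1) ≫ u ≫ δ m = 0 →
      ∃ c : F (k+1) ⟶ W m, c ≫ δ m = 0 ∧ d (k+1) ≫ c = d (k+1) ≫ u := by
  intro t
  induction t with
  | zero =>
    intro k hk m u h0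
    obtain ⟨F', d', ε', hproj', hsurj', hex0', hex', hb⟩ := hpd
    set C : ModuleCat.{0} R := ModuleCat.of R (LinearMap.ker (δ m).hom) with hC
    let v : F (k+1+1) ⟶ C :=
      ModuleCat.ofHom (LinearMap.codRestrict (LinearMap.ker (δ m).hom) (d (k+1) ≫ u).hom
        (fun x => ConcreteCategory.congr_hom h0 x))
    have hvz : d (k+1+1) ≫ v = 0 := by
      ext x
      show u (d (k+1) (d (k+1+1) x)) = 0
      rw [(hex (k+1)).apply_apply_eq_zero x, map_zero]
    have hvext : ExtVanishes R N C (k+1+1) :=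
      ext_vanish_high F' d' ε' hproj' hsurj' hex0' hex' C (hb (k+1+1) (by omega))
    obtain ⟨h, hh⟩ := (bridge F d ε hproj hsurj hex0 hex C (k+1)).1 hvext v hvz
    refine ⟨h ≫ ModuleCat.ofHom (LinearMap.ker (δ m).hom).subtype, ?_, ?_⟩
    · ext x
      exact (h x).2
    · ext x
      have hx : h (d (k+1) x) = v x := ConcreteCategory.congr_hom hh x
      exact congrArg Subtype.val hx
  | succ t ih =>
    intro k hk m u h0
    obtain ⟨m', rfl⟩ : ∃ m', m = m' + 1 := ⟨m - 1, by ring⟩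
    haveI := hproj (k+1+1)
    let q : W m' →ₗ[R] LinearMap.ker (δ (m'+1)).hom :=
      LinearMap.codRestrict _ (δ m').hom (fun x => (hWex m').apply_apply_eq_zero x)
    have hqsurj : Function.Surjective q := by
      rintro ⟨y, hy⟩
      obtain ⟨x, hx⟩ := (hWex m' y).mp hy
      exact ⟨x, Subtype.ext hx⟩
    let v : F (k+1+1) →ₗ[R] LinearMap.ker (δ (m'+1)).hom :=
      LinearMap.codRestrict _ (d (k+1) ≫ u).hom (fun x => ConcreteCategory.congr_hom h0 x)
    obtain ⟨ulift, hulift⟩ := Module.projective_lifting_property q v hqsurj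
    let u' : F (k+1+1) ⟶ W m' := ModuleCat.ofHom ulift
    have hu' : u' ≫ δ m' = d (k+1) ≫ u := by
      ext x
      have hx : q (ulift x) = v x := DFunLike.congr_fun hulift x
      exact congrArg Subtype.val hx
    have hcoc : d (k+1+1) ≫ u' ≫ δ m' = 0 := by
      rw [hu']
      ext x
      show u (d (k+1) (d (k+1+1) x)) = 0
      rw [(hex (k+1)).apply_apply_eq_zero x, map_zero]
    obtain ⟨c', hc'z, hc'⟩ := ih (k+1) (by omega) m' u' hcoc
    have hwz : d (k+1+1) ≫ (u' - c') = 0 := by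
      rw [Preadditive.comp_sub, hc', sub_self]
    obtain ⟨h, hh⟩ := syzygy_bridge F d ε hproj hsurj hex0 hex hfin (W m')
      (hWwi m') (k+1) (u' - c') hwz
    refine ⟨h ≫ δ m', ?_, ?_⟩
    · have hδδ : δ m' ≫ δ (m'+1) = 0 := by
        ext x
        exact (hWex m').apply_apply_eq_zero x
      rw [Category.assoc, hδδ, Limits.comp_zero]
    · rw [← Category.assoc, hh, Preadditive.sub_comp, hu', hc'z, sub_zero]

end Res

end Stmt16Aux

/-- If the left super finitely presented dimension of `R` is finite, i.e. there is `n` with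
`pd_R(M) ≤ n` for every super finitely presented `M`, then every Gorenstein weak injective
`R`-module is weak injective. -/
theorem stmt16 (n : ℕ)
    (hR : ∀ N : ModuleCat.{0} R, IsSuperFinitelyPresented R N → HasProjDimLE R N n) :
    ∀ M : ModuleCat.{0} R, IsGorensteinWeakInjective R M → IsWeakInjective R M := by
  intro M hM N hN
  obtain ⟨W, δ, π, ι, hWwi, hWex, hπsurj, hιinj, hπι, hexπ, hlift⟩ := hM
  obtain ⟨F, d, ε, hfin, hproj, hsurj, hex0, hex⟩ := hN
  have hpd : HasProjDimLE R N n := hR N ⟨F, d, ε, hfin, hproj, hsurj, hex0, hex⟩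
  refine (Stmt16Aux.bridge F d ε hproj hsurj hex0 hex M 0).2 ?_
  intro g hg
  -- lift `g` along the surjection `π : W 0 ⟶ M`
  haveI := hproj (0+1)
  obtain ⟨u0l, hu0l⟩ := Module.projective_lifting_property
    (π.hom : (W 0 : Type) →ₗ[R] M) (g.hom : (F (0+1) : Type) →ₗ[R] M) hπsurj
  let u0 : F (0+1) ⟶ W 0 := ModuleCat.ofHom u0l
  have hu0 : u0 ≫ π = g := by ext x; exact DFunLike.congr_fun hu0l x
  have hgπ : d (0+1) ≫ u0 ≫ π = 0 := by rw [hu0]; exact hg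
  -- lift `d 1 ≫ u0` along `δ (-1)` onto `ker π`
  haveI := hproj (0+1+1)
  let q : (W (-1) : Type) →ₗ[R] LinearMap.ker (π.hom : (W 0 : Type) →ₗ[R] M) :=
    LinearMap.codRestrict _ (δ (-1)).hom (fun x => hexπ.apply_apply_eq_zero x)
  have hqsurj : Function.Surjective q := by
    rintro ⟨y, hy⟩
    obtain ⟨x, hx⟩ := (hexπ y).mp hy
    exact ⟨x, Subtype.ext hx⟩
  let v : (F (0+1+1) : Type) →ₗ[R] LinearMap.ker (π.hom : (W 0 : Type) →ₗ[R] M) :=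
    LinearMap.codRestrict _ (d (0+1) ≫ u0).hom (fun x => ConcreteCategory.congr_hom hgπ x)
  obtain ⟨ul, hul⟩ := Module.projective_lifting_property q v hqsurj
  let u' : F (0+1+1) ⟶ W (-1) := ModuleCat.ofHom ul
  have hu' : u' ≫ δ (-1) = d (0+1) ≫ u0 := by
    ext x
    exact congrArg Subtype.val (DFunLike.congr_fun hul x)
  have hcoc : d (0+1+1) ≫ u' ≫ δ (-1) = 0 := by
    rw [hu']
    ext x
    show u0 (d (0+1) (d (0+1+1) x)) = 0
    rw [(hex (0+1)).apply_apply_eq_zero x, map_zero]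
  -- descend
  obtain ⟨c', hc'z, hc'⟩ := Stmt16Aux.descent F d ε hproj hsurj hex0 hex hfin W δ hWwi hWex
    hpd n (0+1) (by omega) (-1) u' hcoc
  have hwz : d (0+1+1) ≫ (u' - c') = 0 := by
    rw [Preadditive.comp_sub, hc', sub_self]
  obtain ⟨h1, hh1⟩ := Stmt16Aux.syzygy_bridge F d ε hproj hsurj hex0 hex hfin (W (-1))
    (hWwi (-1)) (0+1) (u' - c') hwz
  let cc : F (0+1) ⟶ W 0 := h1 ≫ δ (-1)
  have hcπ : cc ≫ π = 0 := by
    have hδπ : δ (-1) ≫ π = 0 := by ext x; exact hexπ.apply_apply_eq_zero x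
    show (h1 ≫ δ (-1)) ≫ π = 0
    rw [Category.assoc, hδπ, Limits.comp_zero]
  have hdc : d (0+1) ≫ cc = d (0+1) ≫ u0 := by
    show d (0+1) ≫ (h1 ≫ δ (-1)) = d (0+1) ≫ u0
    rw [← Category.assoc, hh1, Preadditive.sub_comp, hu', hc'z, sub_zero]
  have hw0 : d (0+1) ≫ (u0 - cc) = 0 := by
    rw [Preadditive.comp_sub, hdc, sub_self]
  obtain ⟨h0, hh0⟩ := Stmt16Aux.syzygy_bridge F d ε hproj hsurj hex0 hex hfin (W 0)
    (hWwi 0) 0 (u0 - cc) hw0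
  refine ⟨h0 ≫ π, ?_⟩
  rw [← Category.assoc, hh0, Preadditive.sub_comp, hu0, hcπ, sub_zero]
end
end

section
/- Every Gorenstein weak injective R-module is weak injective if and only if for every R-module M, the Gorenstein weak injective dimension of M equals its weak injective dimension. -/
open CategoryTheory Opposite

noncomputable section

variable (R : Type) [Ring R]

/-- `M` has weak injective dimension at most `n`: there is an exact sequence
`0 → M → G⁰ → ⋯ → Gⁿ → 0` with each `Gⁱ` weak injective. -/
def WidLE (M : ModuleCat.{0} R) (n : ℕ) : Prop :=
  ∃ (G : ℕ → ModuleCat.{0} R) (d : ∀ k, G k ⟶ G (k + 1)) (ι : M ⟶ G 0),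
    (∀ k, IsWeakInjective R (G k)) ∧
    Function.Injective ι ∧ Function.Exact ι (d 0) ∧
    (∀ k, Function.Exact (d k) (d (k + 1))) ∧
    ∀ k, n < k → Subsingleton (G k)

/-- `M` has Gorenstein weak injective dimension at most `n`. -/
def GwidLE (M : ModuleCat.{0} R) (n : ℕ) : Prop :=
  ∃ (G : ℕ → ModuleCat.{0} R) (d : ∀ k, G k ⟶ G (k + 1)) (ι : M ⟶ G 0),
    (∀ k, IsGorensteinWeakInjective R (G k)) ∧
    Function.Injective ι ∧ Function.Exact ι (d 0) ∧
    (∀ k, Function.Exact (d k) (d (k + 1))) ∧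
    ∀ k, n < k → Subsingleton (G k)

/-- The weak injective dimension of `M`. -/
def wid (M : ModuleCat.{0} R) : ℕ∞ :=
  sInf {c : ℕ∞ | ∃ n : ℕ, c = n ∧ WidLE R M n}

/-- The Gorenstein weak injective dimension of `M`. -/
def Gwid (M : ModuleCat.{0} R) : ℕ∞ :=
  sInf {c : ℕ∞ | ∃ n : ℕ, c = n ∧ GwidLE R M n}

section Aux

open Limits

lemma aux_subsingleton_of_isZero {X : ModuleCat.{0} ℤ} (h : IsZero X) :
    Subsingleton X := by
  rw [IsZero.iff_id_eq_zero] at h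
  refine ⟨fun a b => ?_⟩
  have ha : a = (𝟙 X : X ⟶ X) a := rfl
  have hb : b = (𝟙 X : X ⟶ X) b := rfl
  rw [ha, hb, h]
  rfl

lemma aux_extVanishes_of_subsingleton (N M : ModuleCat.{0} R) [Subsingleton M] (i : ℕ) :
    ExtVanishes R N M i := by
  have P : ProjectiveResolution N := ProjectiveResolution.of N
  have hz : IsZero ((P.complex.linearYonedaObj ℤ M).homology i) := by
    rw [← HomologicalComplex.exactAt_iff_isZero_homology, HomologicalComplex.exactAt_iff]
    refine ShortComplex.exact_of_isZero_X₂ _ ?_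
    haveI : Subsingleton (P.complex.X i ⟶ M) :=
      ⟨fun f g => by ext x; exact Subsingleton.elim _ _⟩
    haveI : Subsingleton ((HomologicalComplex.sc (P.complex.linearYonedaObj ℤ M) i).X₂) :=
      inferInstanceAs (Subsingleton (P.complex.X i ⟶ M))
    exact ModuleCat.isZero_of_subsingleton _
  show Subsingleton (((Ext ℤ (ModuleCat.{0} R) i).obj (op N)).obj M)
  exact aux_subsingleton_of_isZero (hz.of_iso (P.isoExt i M))

lemma aux_extVanishes_of_iso {N M M' : ModuleCat.{0} R} (e : M ≅ M') (i : ℕ)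
    (h : ExtVanishes R N M i) : ExtVanishes R N M' i := by
  have e' : ((Ext ℤ (ModuleCat.{0} R) i).obj (op N)).obj M ≅
      ((Ext ℤ (ModuleCat.{0} R) i).obj (op N)).obj M' :=
    ((Ext ℤ (ModuleCat.{0} R) i).obj (op N)).mapIso e
  have eq : (((Ext ℤ (ModuleCat.{0} R) i).obj (op N)).obj M' : Type) ≃
      (((Ext ℤ (ModuleCat.{0} R) i).obj (op N)).obj M : Type) :=
    ((forget (ModuleCat.{0} ℤ)).mapIso e'.symm).toEquiv
  haveI : Subsingleton (((Ext ℤ (ModuleCat.{0} R) i).obj (op N)).obj M) := h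
  exact eq.subsingleton

lemma aux_weakInjective_of_iso {M M' : ModuleCat.{0} R} (e : M ≅ M')
    (h : IsWeakInjective R M) : IsWeakInjective R M' :=
  fun N hN => aux_extVanishes_of_iso R e 1 (h N hN)

lemma aux_weakInjective_of_subsingleton (M : ModuleCat.{0} R) [Subsingleton M] :
    IsWeakInjective R M :=
  fun N _ => aux_extVanishes_of_subsingleton R N M 1

lemma aux_gwi_of_wi {M : ModuleCat.{0} R} (h : IsWeakInjective R M) :
    IsGorensteinWeakInjective R M := by
  refine ⟨fun _ => M, fun n => if Even n then 𝟙 M else 0, 𝟙 M, 𝟙 M,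
    fun _ => h, ?_, fun x => ⟨x, rfl⟩, fun a b hab => hab, ?_, ?_, ?_⟩
  · intro n
    dsimp only
    rcases Int.even_or_odd n with he | ho
    · have h1 : ¬ Even (n + 1) := by simp [Int.even_add_one, he]
      rw [if_pos he, if_neg h1]
      intro y
      constructor
      · intro _; exact ⟨y, rfl⟩
      · intro _; rfl
    · have h0 : ¬ Even n := Int.not_even_iff_odd.mpr ho
      have h1 : Even (n + 1) := by rwa [Int.even_add_one]
      rw [if_neg h0, if_pos h1]
      intro y
      constructor
      · intro hy
        refine ⟨0, ?_⟩
        change (0 : M) = y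
        exact hy.symm
      · rintro ⟨x, hx⟩
        change (0 : M) = y at hx
        exact hx.symm
  · have : Even (0 : ℤ) := ⟨0, rfl⟩
    show 𝟙 M ≫ 𝟙 M = if Even (0:ℤ) then 𝟙 M else 0
    rw [if_pos this, Category.id_comp]
  · have hodd : ¬ Even (-1 : ℤ) := by decide
    show Function.Exact ⇑(if Even (-1:ℤ) then 𝟙 M else 0) ⇑(𝟙 M)
    rw [if_neg hodd]
    intro y
    constructor
    · intro hy
      exact ⟨y, hy.symm⟩
    · rintro ⟨x, hx⟩
      have : (0 : M ⟶ M) x = 0 := rfl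
      rw [← hx, this]
      rfl
  · intro N _ n g hg
    dsimp only at hg ⊢
    by_cases he : Even n
    · refine ⟨g, ?_⟩
      rw [if_pos he, Category.comp_id]
    · have h1 : Even (n + 1) := by rwa [Int.even_add_one]
      rw [if_pos h1, Category.comp_id] at hg
      refine ⟨0, ?_⟩
      rw [if_neg he, hg, Limits.comp_zero]

/-- The zero module. -/
def auxZ : ModuleCat.{0} R := ModuleCat.of R PUnit

instance : Subsingleton (auxZ R) := by
  dsimp [auxZ]; infer_instance

lemma aux_gwi_Z : IsGorensteinWeakInjective R (auxZ R) :=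
  aux_gwi_of_wi R (aux_weakInjective_of_subsingleton R (auxZ R))

/-- The coresolution `M → 0 → 0 → ⋯`. -/
def auxG (M : ModuleCat.{0} R) : ℕ → ModuleCat.{0} R
  | 0 => M
  | _ + 1 => auxZ R

lemma aux_gwidle_zero {M : ModuleCat.{0} R} (hM : IsGorensteinWeakInjective R M) :
    GwidLE R M 0 := by
  refine ⟨auxG R M, fun k => 0, 𝟙 M, ?_, fun a b hab => hab, ?_, ?_, ?_⟩
  · intro k
    cases k with
    | zero => exact hM
    | succ k => exact aux_gwi_Z R
  · haveI : Subsingleton (auxG R M 1) := inferInstanceAs (Subsingleton (auxZ R))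
    intro y
    constructor
    · intro _; exact ⟨y, rfl⟩
    · intro _
      exact Subsingleton.elim _ _
  · intro k
    haveI : Subsingleton (auxG R M (k + 1)) := inferInstanceAs (Subsingleton (auxZ R))
    haveI : Subsingleton (auxG R M (k + 1 + 1)) := inferInstanceAs (Subsingleton (auxZ R))
    intro y
    constructor
    · intro _
      exact ⟨0, Subsingleton.elim _ _⟩
    · intro _
      exact Subsingleton.elim _ _
  · intro k hk
    cases k with
    | zero => exact absurd hk (by simp)
    | succ k => exact inferInstanceAs (Subsingleton (auxZ R))

lemma aux_widle_to_gwidle {M : ModuleCat.{0} R} {n : ℕ} (h : WidLE R M n) :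
    GwidLE R M n := by
  obtain ⟨G, d, ι, hwi, h1, h2, h3, h4⟩ := h
  exact ⟨G, d, ι, fun k => aux_gwi_of_wi R (hwi k), h1, h2, h3, h4⟩

lemma aux_wi_of_widle_zero {M : ModuleCat.{0} R} (h : WidLE R M 0) :
    IsWeakInjective R M := by
  obtain ⟨G, d, ι, hwi, hinj, hex, _, hss⟩ := h
  haveI : Subsingleton (G 1) := hss 1 (by norm_num)
  have hsurj : Function.Surjective ι := by
    intro y
    exact (hex y).mp (Subsingleton.elim _ _)
  have e : M ≃ₗ[R] G 0 := LinearEquiv.ofBijective ι.hom ⟨hinj, hsurj⟩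
  exact aux_weakInjective_of_iso R e.symm.toModuleIso (hwi 0)

end Aux

/-- Every Gorenstein weak injective `R`-module is weak injective iff for every `R`-module
`M` the Gorenstein weak injective dimension of `M` equals its weak injective dimension. -/
theorem stmt17 :
    (∀ M : ModuleCat.{0} R, IsGorensteinWeakInjective R M → IsWeakInjective R M) ↔
      (∀ M : ModuleCat.{0} R, Gwid R M = wid R M) := by
  constructor
  · intro h M
    unfold Gwid wid
    congr 1
    ext c
    constructor
    · rintro ⟨n, rfl, G, d, ι, hgwi, h1, h2, h3, h4⟩
      exact ⟨n, rfl, G, d, ι, fun k => h (G k) (hgwi k), h1, h2, h3, h4⟩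
    · rintro ⟨n, rfl, hW⟩
      exact ⟨n, rfl, aux_widle_to_gwidle R hW⟩
  · intro h M hM
    have hGwid : Gwid R M = 0 := by
      refine le_antisymm ?_ zero_le
      exact sInf_le ⟨0, by simp, aux_gwidle_zero R hM⟩
    have hwid : wid R M = 0 := by rw [← h M]; exact hGwid
    have h01 : sInf {c : ℕ∞ | ∃ n : ℕ, c = n ∧ WidLE R M n} < 1 := by
      rw [show sInf {c : ℕ∞ | ∃ n : ℕ, c = n ∧ WidLE R M n} = wid R M from rfl, hwid]
      norm_num
    obtain ⟨a, ⟨n, rfl, hWn⟩, ha⟩ := sInf_lt_iff.mp h01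
    have hn0 : n = 0 := by
      by_contra hne
      have : (1 : ℕ∞) ≤ (n : ℕ∞) := by
        exact_mod_cast Nat.one_le_iff_ne_zero.mpr hne
      exact absurd ha (not_lt.mpr this)
    subst hn0
    exact aux_wi_of_widle_zero R hWn
end
end
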